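/- arXiv:2302.13250 — 3 statements merged into one kernel-verified Lean document; each statement's English description precedes it below -/
import Mathlib

section
/- Let σ be a partition of the primes and let G be a finite σ-SC-group whose σ-soluble residual equals its σ-supersoluble residual: G^{𝔖_σ} = G^{𝔘_σ}. Then G^{𝔖_σ} centralizes G_𝔖 ∩ G^{𝔑_σ}, where G_𝔖 is the soluble radical of G. -/
open Subgroup
open scoped Pointwise
open scoped commutatorElement

section Defs

variable {ι : Type*}

/-- `σ` is a partition of the set of all primes. -/
structure IsPrimePartition (σ : ι → Set ℕ) : Prop where
  prime_of_mem : ∀ i p, p ∈ σ i → p.Prime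
  existsUnique_mem : ∀ p : ℕ, p.Prime → ∃! i, p ∈ σ i

/-- every prime dividing `n` lies in the block `σ i`. -/
def IsSigmaNumber (σ : ι → Set ℕ) (i : ι) (n : ℕ) : Prop :=
  ∀ p : ℕ, p.Prime → p ∣ n → p ∈ σ i

/-- `G` is a `σ i`-group. -/
def IsSigmaIGroup (σ : ι → Set ℕ) (i : ι) (G : Type*) [Group G] : Prop :=
  IsSigmaNumber σ i (Nat.card G)

/-- `G` is σ-primary: it is a `σ i`-group for some `i`. -/
def IsSigmaPrimary (σ : ι → Set ℕ) (G : Type*) [Group G] : Prop :=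
  ∃ i, IsSigmaIGroup σ i G

/-- `G` is σ-nilpotent: `G` is the internal direct product of normal
σ-primary subgroups (one `σ i`-subgroup for each block). -/
def IsSigmaNilpotent (σ : ι → Set ℕ) (G : Type*) [Group G] : Prop :=
  ∃ H : ι → Subgroup G, (∀ i, (H i).Normal) ∧ (∀ i, IsSigmaIGroup σ i ↥(H i)) ∧
    iSupIndep H ∧ iSup H = ⊤

/-- One step in a σ-subnormal chain: `A ≤ B` and either `A` is normal in `B` or
`B/(A_B)` (quotient by the normal core of `A` in `B`) is σ-primary. -/
def SigmaSubnormalStep (σ : ι → Set ℕ) {G : Type*} [Group G] (A B : Subgroup G) : Prop :=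
  A ≤ B ∧ (((A.subgroupOf B).Normal) ∨
    IsSigmaPrimary σ (↥B ⧸ (A.subgroupOf B).normalCore))

/-- `A` is σ-subnormal in `G`. -/
def IsSigmaSubnormal (σ : ι → Set ℕ) {G : Type*} [Group G] (A : Subgroup G) : Prop :=
  ∃ n, ∃ C : Fin (n + 1) → Subgroup G, C 0 = A ∧ C (Fin.last n) = ⊤ ∧
    ∀ k : Fin n, SigmaSubnormalStep σ (C k.castSucc) (C k.succ)

/-- `A` is subnormal in `G`. -/
def IsSubnormalSub {G : Type*} [Group G] (A : Subgroup G) : Prop :=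
  ∃ n, ∃ C : Fin (n + 1) → Subgroup G, C 0 = A ∧ C (Fin.last n) = ⊤ ∧
    ∀ k : Fin n, C k.castSucc ≤ C k.succ ∧ ((C k.castSucc).subgroupOf (C k.succ)).Normal

/-- `M` is a modular subgroup of `G`: a modular element of the subgroup lattice. -/
def IsModularSubgroup {G : Type*} [Group G] (M : Subgroup G) : Prop :=
  (∀ X Z : Subgroup G, X ≤ Z → X ⊔ (M ⊓ Z) = (X ⊔ M) ⊓ Z) ∧
  (∀ Y Z : Subgroup G, M ≤ Z → M ⊔ (Y ⊓ Z) = (M ⊔ Y) ⊓ Z)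

/-- `A` is submodular in `G`: there is a chain from `A` to `G` with each
term modular in the next. -/
def IsSubmodular {G : Type*} [Group G] (A : Subgroup G) : Prop :=
  ∃ n, ∃ C : Fin (n + 1) → Subgroup G, C 0 = A ∧ C (Fin.last n) = ⊤ ∧
    ∀ k : Fin n, C k.castSucc ≤ C k.succ ∧
      IsModularSubgroup ((C k.castSucc).subgroupOf (C k.succ))

/-- `H` is a Hall `σ i`-subgroup of `G`. -/
def IsHallSigmaI (σ : ι → Set ℕ) (i : ι) {G : Type*} [Group G] (H : Subgroup G) : Prop :=
  IsSigmaNumber σ i (Nat.card H) ∧ ∀ p : ℕ, p.Prime → p ∣ H.index → p ∉ σ i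

/-- `G` is σ-full: it has a Hall `σ i`-subgroup for every `σ i ∈ σ(G)`. -/
def IsSigmaFull (σ : ι → Set ℕ) (G : Type*) [Group G] : Prop :=
  ∀ i, (∃ p : ℕ, p.Prime ∧ p ∈ σ i ∧ p ∣ Nat.card G) →
    ∃ H : Subgroup G, IsHallSigmaI σ i H

/-- Two subgroups permute. -/
def Permutes {G : Type*} [Group G] (A B : Subgroup G) : Prop :=
  (A : Set G) * (B : Set G) = (B : Set G) * (A : Set G)

/-- `A` is σ-permutable in `G`: it permutes with every Hall `σ i`-subgroup of `G`
(hence with all their conjugates). -/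
def IsSigmaPermutable (σ : ι → Set ℕ) {G : Type*} [Group G] (A : Subgroup G) : Prop :=
  ∀ i, ∀ H : Subgroup G, IsHallSigmaI σ i H → Permutes A H

/-- `A` is quasinormal (permutable) in `G`. -/
def IsQuasinormal {G : Type*} [Group G] (A : Subgroup G) : Prop :=
  ∀ B : Subgroup G, Permutes A B

/-- `A` is σ-quasinormal in `G`: modular and σ-subnormal. -/
def IsSigmaQuasinormal (σ : ι → Set ℕ) {G : Type*} [Group G] (A : Subgroup G) : Prop :=
  IsModularSubgroup A ∧ IsSigmaSubnormal σ A

/-- σ-permutability is a transitive relation on `G`. -/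
def IsPSigmaTGroup (σ : ι → Set ℕ) (G : Type*) [Group G] : Prop :=
  ∀ K H : Subgroup G, H ≤ K → IsSigmaPermutable σ (H.subgroupOf K) →
    IsSigmaPermutable σ K → IsSigmaPermutable σ H

/-- `H/K` is a chief factor of `G`. -/
def IsChiefFactor (G : Type*) [Group G] (K H : Subgroup G) : Prop :=
  K.Normal ∧ H.Normal ∧ K < H ∧
    ∀ N : Subgroup G, N.Normal → K ≤ N → N ≤ H → N = K ∨ N = H

/-- `G` is σ-soluble: every chief factor of `G` is σ-primary. -/
def IsSigmaSoluble (σ : ι → Set ℕ) (G : Type*) [Group G] : Prop :=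
  ∀ K H : Subgroup G, ∀ hc : IsChiefFactor G K H,
    letI := hc.1; IsSigmaPrimary σ (↥H ⧸ K.subgroupOf H)

/-- The σ-nilpotent residual `G^{𝔑_σ}` of `G`. -/
def sigmaNilpotentResidual (σ : ι → Set ℕ) (G : Type*) [Group G] : Subgroup G :=
  sInf {N : Subgroup G | ∃ h : N.Normal, letI := h; IsSigmaNilpotent σ (G ⧸ N)}

/-- The σ-soluble residual `G^{𝔖_σ}` of `G`. -/
def sigmaSolubleResidual (σ : ι → Set ℕ) (G : Type*) [Group G] : Subgroup G :=
  sInf {N : Subgroup G | ∃ h : N.Normal, letI := h; IsSigmaSoluble σ (G ⧸ N)}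

/-- `G` is a σ-SC-group: every chief factor of `G` below `G^{𝔑_σ}` is simple. -/
def IsSigmaSCGroup (σ : ι → Set ℕ) (G : Type*) [Group G] : Prop :=
  ∀ K H : Subgroup G, ∀ hc : IsChiefFactor G K H, H ≤ sigmaNilpotentResidual σ G →
    letI := hc.1; IsSimpleGroup (↥H ⧸ K.subgroupOf H)

/-- `G` is σ-supersoluble: every chief factor of `G` below `G^{𝔑_σ}` is cyclic. -/
def IsSigmaSupersoluble (σ : ι → Set ℕ) (G : Type*) [Group G] : Prop :=
  ∀ K H : Subgroup G, ∀ hc : IsChiefFactor G K H, H ≤ sigmaNilpotentResidual σ G →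
    letI := hc.1; IsCyclic (↥H ⧸ K.subgroupOf H)

/-- The σ-supersoluble residual `G^{𝔘_σ}` of `G`. -/
def sigmaSupersolubleResidual (σ : ι → Set ℕ) (G : Type*) [Group G] : Subgroup G :=
  sInf {N : Subgroup G | ∃ h : N.Normal, letI := h; IsSigmaSupersoluble σ (G ⧸ N)}

/-- The soluble radical `G_𝔖`: the largest soluble normal subgroup of `G`. -/
def solubleRadical (G : Type*) [Group G] : Subgroup G :=
  sSup {N : Subgroup G | N.Normal ∧ IsSolvable ↥N}

/-- `O_{σ i}(G)`: the largest normal `σ i`-subgroup of `G`. -/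
def sigmaCore (σ : ι → Set ℕ) (i : ι) (G : Type*) [Group G] : Subgroup G :=
  sSup {N : Subgroup G | N.Normal ∧ IsSigmaIGroup σ i ↥N}

/-- `O^{σ i}(G)`: the smallest normal subgroup of `G` with `σ i`-quotient. -/
def sigmaIResidual (σ : ι → Set ℕ) (i : ι) (G : Type*) [Group G] : Subgroup G :=
  sInf {N : Subgroup G | ∃ h : N.Normal, letI := h; IsSigmaIGroup σ i (G ⧸ N)}

end Defs


section AuxLemmas

open Subgroup

variable {G : Type*} [Group G]

theorem mySInf_normal {S : Set (Subgroup G)} (hS : ∀ N ∈ S, N.Normal) : (sInf S).Normal :=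
  ⟨fun n hn g => Subgroup.mem_sInf.2 fun N hN =>
    (hS N hN).conj_mem _ (Subgroup.mem_sInf.1 hn N hN) g⟩

theorem myMap_conj_self {N : Subgroup G} (hN : N.Normal) (g : G) :
    Subgroup.map (MulAut.conj g).toMonoidHom N = N := by
  ext x
  simp only [Subgroup.mem_map, MulEquiv.coe_toMonoidHom, MulAut.conj_apply]
  constructor
  · rintro ⟨n, hn, rfl⟩
    exact hN.conj_mem n hn g
  · intro hx
    refine ⟨g⁻¹ * x * g, ?_, by group⟩
    have := hN.conj_mem x hx g⁻¹
    simpa [mul_assoc] using this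

theorem mySSup_normal {S : Set (Subgroup G)} (hS : ∀ N ∈ S, N.Normal) : (sSup S).Normal := by
  constructor
  intro n hn g
  have h1 : sSup S ≤ Subgroup.map (MulAut.conj g⁻¹).toMonoidHom (sSup S) :=
    sSup_le fun N hN =>
      (myMap_conj_self (hS N hN) g⁻¹).symm.le.trans (Subgroup.map_mono (le_sSup hN))
  obtain ⟨m, hm, hme⟩ := h1 hn
  have : g * n * g⁻¹ = m := by
    simp only [MulEquiv.coe_toMonoidHom, MulAut.conj_apply] at hme
    rw [← hme]; group
  rw [this]; exact hm

theorem mySup_normal {A B : Subgroup G} (hA : A.Normal) (hB : B.Normal) : (A ⊔ B).Normal := by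
  constructor
  intro n hn g
  have hn' : n ∈ (↑A * ↑B : Set G) := by
    rw [← Subgroup.mul_normal]; exact hn
  obtain ⟨a, ha, b, hb, rfl⟩ := hn'
  have : g * (a * b) * g⁻¹ = (g * a * g⁻¹) * (g * b * g⁻¹) := by group
  rw [this]
  exact mul_mem (le_sup_left (α := Subgroup G) (hA.conj_mem a ha g))
    (le_sup_right (α := Subgroup G) (hB.conj_mem b hb g))

theorem mySup_solvable [Finite G] {A B : Subgroup G} (hA : A.Normal) (hB : B.Normal)
    (sA : Group.IsSolvable ↥A) (sB : Group.IsSolvable ↥B) : Group.IsSolvable ↥(A ⊔ B) := by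
  set J := A ⊔ B with hJ
  haveI := hA
  haveI : (A.subgroupOf J).Normal := Subgroup.normal_subgroupOf
  haveI : Group.IsSolvable ↥(A.subgroupOf J) := by
    have e := Subgroup.subgroupOfEquivOfLe (le_sup_left : A ≤ J)
    exact solvable_of_solvable_injective (f := e.toMonoidHom) e.injective
  haveI : Group.IsSolvable (↥J ⧸ A.subgroupOf J) := by
    apply solvable_of_surjective
      (f := (QuotientGroup.mk' (A.subgroupOf J)).comp (Subgroup.inclusion (le_sup_right : B ≤ J)))
    intro q
    obtain ⟨x, rfl⟩ := QuotientGroup.mk'_surjective _ q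
    have hx : (x : G) ∈ (↑A * ↑B : Set G) := by rw [← Subgroup.mul_normal]; exact x.2
    obtain ⟨a, ha, b, hb, hab⟩ := hx
    have hab' : a * b = (x : G) := hab
    refine ⟨⟨b, hb⟩, ?_⟩
    simp only [MonoidHom.comp_apply, QuotientGroup.mk'_apply]
    rw [QuotientGroup.eq]
    refine Subgroup.mem_subgroupOf.2 ?_
    have hc : ((Subgroup.inclusion (le_sup_right : B ≤ J) ⟨b, hb⟩ : ↥J) : G) = b := rfl
    have hval : (((Subgroup.inclusion (le_sup_right : B ≤ J) ⟨b, hb⟩)⁻¹ * x : ↥J) : G)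
        = b⁻¹ * a * b := by
      push_cast [hc, ← hab']
      group
    show (((Subgroup.inclusion (le_sup_right : B ≤ J) ⟨b, hb⟩)⁻¹ * x : ↥J) : G) ∈ A
    rw [hval]
    have := hA.conj_mem a ha b⁻¹
    simpa [mul_assoc] using this
  exact solvable_of_ker_le_range (A.subgroupOf J).subtype
    (QuotientGroup.mk' (A.subgroupOf J))
    (by rw [QuotientGroup.ker_mk', Subgroup.range_subtype])

theorem mySolubleRadical_solvable (G : Type*) [Group G] [Finite G] :
    IsSolvable ↥(solubleRadical G) := by
  classical
  haveI : Finite (Subgroup G) := Finite.of_injective _ SetLike.coe_injective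
  have hfin : ({N : Subgroup G | N.Normal ∧ IsSolvable ↥N}).Finite := Set.toFinite _
  have key : ∀ s : Finset (Subgroup G), (∀ N ∈ s, N.Normal ∧ IsSolvable ↥N) →
      (s.sup id).Normal ∧ IsSolvable ↥(s.sup id) := by
    intro s hs
    have hbotsolv : IsSolvable ↥(⊥ : Subgroup G) := by
      have hss : ∀ a b : ↥(⊥ : Subgroup G), a = b := by
        intro a b
        have ha := a.2; have hb := b.2
        rw [Subgroup.mem_bot] at ha hb
        exact Subtype.ext (ha.trans hb.symm)
      exact isSolvable_of_comm (fun a b => by rw [hss a b])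
    refine Finset.sup_induction (p := fun K : Subgroup G => K.Normal ∧ IsSolvable ↥K)
      ⟨inferInstance, hbotsolv⟩ ?_ hs
    rintro a ⟨ha1, ha2⟩ b ⟨hb1, hb2⟩
    exact ⟨mySup_normal ha1 hb1, mySup_solvable ha1 hb1 ha2 hb2⟩
  have heq : solubleRadical G = hfin.toFinset.sup id := by
    apply le_antisymm
    · exact sSup_le fun N hN => Finset.le_sup (f := id) (hfin.mem_toFinset.2 hN)
    · exact Finset.sup_le fun N hN => le_sSup (hfin.mem_toFinset.1 hN)
  rw [heq]
  exact (key _ (fun N hN => hfin.mem_toFinset.1 hN)).2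

theorem myIsCyclic_of_simple_solvable (Q : Type*) [Group Q] [hs : IsSimpleGroup Q]
    [hsol : Group.IsSolvable Q] : IsCyclic Q := by
  have hcomm : ∀ a b : Q, a * b = b * a := by
    rcases (Subgroup.commutator_normal (⊤ : Subgroup Q) ⊤).eq_bot_or_eq_top with h | h
    · intro a b
      have : ⁅a, b⁆ ∈ (⊥ : Subgroup Q) :=
        h ▸ Subgroup.commutator_mem_commutator (Subgroup.mem_top a) (Subgroup.mem_top b)
      rw [Subgroup.mem_bot] at this
      exact commutatorElement_eq_one_iff_mul_comm.mp this
    · exfalso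
      have hd : ∀ n, derivedSeries Q n = ⊤ := by
        intro n
        induction n with
        | zero => exact derivedSeries_zero Q
        | succ n ih => rw [derivedSeries_succ, ih]; exact h
      obtain ⟨n, hn⟩ := hsol.solvable
      rw [hd n] at hn
      obtain ⟨u, hu⟩ := exists_ne (1 : Q)
      have : u ∈ (⊥ : Subgroup Q) := hn ▸ Subgroup.mem_top u
      exact hu (Subgroup.mem_bot.mp this)
  obtain ⟨x, hx⟩ := exists_ne (1 : Q)
  have hnorm : (Subgroup.zpowers x).Normal := by
    constructor
    intro n hn g
    have : g * n * g⁻¹ = n := by rw [hcomm g n]; group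
    rwa [this]
  rcases hnorm.eq_bot_or_eq_top with h | h
  · exact absurd (Subgroup.mem_bot.mp (h ▸ Subgroup.mem_zpowers x)) hx
  · refine ⟨⟨x, fun y => ?_⟩⟩
    show y ∈ Subgroup.zpowers x
    rw [h]
    exact Subgroup.mem_top y

end AuxLemmas

section AuxLemmas2

open Subgroup

/-- Conjugation by `g` as a homomorphism of a normal subgroup. -/
def myConjHom {G : Type*} [Group G] (N : Subgroup G) (hN : N.Normal) (g : G) : ↥N →* ↥N where
  toFun x := ⟨g * x * g⁻¹, hN.conj_mem x x.2 g⟩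
  map_one' := by ext; simp
  map_mul' x y := by ext; push_cast; group

theorem myConjHom_coe {G : Type*} [Group G] (N : Subgroup G) (hN : N.Normal) (g : G)
    (x : ↥N) : ((myConjHom N hN g x : ↥N) : G) = g * (x : G) * g⁻¹ := rfl

theorem myConjHom_comp {G : Type*} [Group G] (N : Subgroup G) (hN : N.Normal) (a b : G)
    (x : ↥N) : myConjHom N hN (a * b) x = myConjHom N hN a (myConjHom N hN b x) := by
  ext
  rw [myConjHom_coe, myConjHom_coe, myConjHom_coe]
  group

/-- Iterated commutator subgroups of a subgroup. -/
def myHd {X : Type*} [Group X] (H : Subgroup X) : ℕ → Subgroup X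
  | 0 => H
  | n + 1 => ⁅myHd H n, myHd H n⁆

/-- Every finite solvable group is σ-soluble. -/
theorem myIsSigmaSoluble_of_solvable {ι : Type*} {σ : ι → Set ℕ} (hσ : IsPrimePartition σ)
    (X : Type*) [Group X] [Finite X] (hsol : IsSolvable X) : IsSigmaSoluble σ X := by
  classical
  intro K H hc
  obtain ⟨hK, hH, hKH, hmin⟩ := hc
  haveI := hK; haveI := hH
  haveI : (K.subgroupOf H).Normal := Subgroup.normal_subgroupOf
  -- derived series of H inside X
  have Hds : ∀ n, myHd H (n + 1) = ⁅myHd H n, myHd H n⁆ := fun n => rfl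
  have HdNormal : ∀ n, (myHd H n).Normal := by
    intro n
    induction n with
    | zero => exact hH
    | succ n ih => rw [Hds]; exact @Subgroup.commutator_normal _ _ _ _ ih ih
  have HdleSelf : ∀ n, ⁅myHd H n, myHd H n⁆ ≤ myHd H n := by
    intro n
    rw [Subgroup.commutator_le]
    intro g1 h1 g2 h2
    rw [commutatorElement_def]
    exact mul_mem (mul_mem (mul_mem h1 h2) (inv_mem h1)) (inv_mem h2)
  have HdleH : ∀ n, myHd H n ≤ H := by
    intro n
    induction n with
    | zero => exact le_rfl
    | succ n ih => exact (HdleSelf n).trans ih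
  have HdleD : ∀ n, myHd H n ≤ derivedSeries X n := by
    intro n
    induction n with
    | zero => rw [derivedSeries_zero]; exact le_top
    | succ n ih => rw [Hds, derivedSeries_succ]; exact Subgroup.commutator_mono ih ih
  obtain ⟨nb, hnb⟩ := hsol.solvable
  have walk : ∀ n, myHd H n ≤ K → ∃ m, ¬ myHd H m ≤ K ∧ ⁅myHd H m, myHd H m⁆ ≤ K := by
    intro n
    induction n with
    | zero => exact fun h => absurd h hKH.not_ge
    | succ n ih =>
      intro h
      rcases Classical.em (myHd H n ≤ K) with hc | hc
      · exact ih hc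
      · exact ⟨n, hc, by rw [← Hds]; exact h⟩
  obtain ⟨m, hBK, hBB⟩ := walk nb ((HdleD nb).trans (by rw [hnb]; exact bot_le))
  have hBH : myHd H m ≤ H := HdleH m
  have hsupN : (myHd H m ⊔ K).Normal := mySup_normal (HdNormal m) hK
  have hBKH : myHd H m ⊔ K = H := by
    rcases hmin (myHd H m ⊔ K) hsupN le_sup_right (sup_le hBH hKH.le) with h | h
    · exact absurd (le_sup_left.trans h.le) hBK
    · exact h
  -- representatives from B
  have hrep : ∀ q : ↥H ⧸ K.subgroupOf H, ∃ b : X, ∃ hb : b ∈ H, b ∈ myHd H m ∧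
      q = QuotientGroup.mk (⟨b, hb⟩ : ↥H) := by
    intro q
    obtain ⟨x, hxq⟩ := QuotientGroup.mk_surjective q
    have hx : (x : X) ∈ ((myHd H m : Set X) * (K : Set X)) := by
      rw [← Subgroup.mul_normal, hBKH]; exact x.2
    obtain ⟨b, hb, k, hk, hbk⟩ := hx
    refine ⟨b, hBH hb, hb, ?_⟩
    rw [← hxq]
    rw [QuotientGroup.eq]
    refine Subgroup.mem_subgroupOf.2 ?_
    have hcoe : ((x⁻¹ * ⟨b, hBH hb⟩ : ↥H) : X) = (x : X)⁻¹ * b := rfl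
    rw [hcoe]
    have hxval : (x : X) = b * k := hbk.symm
    rw [hxval]
    have hred : (b * k)⁻¹ * b = k⁻¹ := by group
    rw [hred]
    exact inv_mem hk
  have hcomm : ∀ q1 q2 : ↥H ⧸ K.subgroupOf H, q1 * q2 = q2 * q1 := by
    intro q1 q2
    obtain ⟨b1, hb1, hB1, rfl⟩ := hrep q1
    obtain ⟨b2, hb2, hB2, rfl⟩ := hrep q2
    show QuotientGroup.mk _ = QuotientGroup.mk _
    rw [QuotientGroup.eq]
    refine Subgroup.mem_subgroupOf.2 ?_
    have hcoe : ((((⟨b1, hb1⟩ : ↥H) * ⟨b2, hb2⟩)⁻¹ * ((⟨b2, hb2⟩ : ↥H) * ⟨b1, hb1⟩) : ↥H) : X)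
        = (b1 * b2)⁻¹ * (b2 * b1) := rfl
    rw [hcoe]
    have hval : (b1 * b2)⁻¹ * (b2 * b1) = ⁅b2⁻¹, b1⁻¹⁆ := by
      rw [commutatorElement_def]; group
    rw [hval]
    exact hBB (Subgroup.commutator_mem_commutator (inv_mem hB2) (inv_mem hB1))
  -- the quotient is a nontrivial p-group of exponent p
  have hne : Nat.card (↥H ⧸ K.subgroupOf H) ≠ 1 := by
    obtain ⟨x, hxH, hxK⟩ := SetLike.exists_of_lt hKH
    intro h1
    have hsub : Subsingleton (↥H ⧸ K.subgroupOf H) := (Nat.card_eq_one_iff_unique.mp h1).1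
    have : (QuotientGroup.mk (⟨x, hxH⟩ : ↥H) : ↥H ⧸ K.subgroupOf H) = 1 := Subsingleton.elim _ _
    rw [QuotientGroup.eq_one_iff] at this
    exact hxK (Subgroup.mem_subgroupOf.1 this)
  set p := (Nat.card (↥H ⧸ K.subgroupOf H)).minFac with hpdef
  have hp : p.Prime := Nat.minFac_prime hne
  haveI : Fintype (↥H ⧸ K.subgroupOf H) := Fintype.ofFinite _
  haveI : Fact p.Prime := ⟨hp⟩
  obtain ⟨q, hq⟩ := exists_prime_orderOf_dvd_card (G := ↥H ⧸ K.subgroupOf H) p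
    (by rw [← Nat.card_eq_fintype_card]; exact Nat.minFac_dvd _)
  -- the subgroup L
  have hpowmem : ∀ a b : X, a ∈ H → b ∈ H → a ^ p ∈ K → b ^ p ∈ K → (a * b) ^ p ∈ K := by
    intro a b haH hbH haK hbK
    have h1 : ((QuotientGroup.mk ((⟨a, haH⟩ : ↥H) * ⟨b, hbH⟩) : ↥H ⧸ K.subgroupOf H)) ^ p = 1 := by
      rw [QuotientGroup.mk_mul]
      have hcab : Commute (QuotientGroup.mk (⟨a, haH⟩ : ↥H) : ↥H ⧸ K.subgroupOf H)
          (QuotientGroup.mk (⟨b, hbH⟩ : ↥H)) := hcomm _ _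
      rw [hcab.mul_pow]
      have ha' : (QuotientGroup.mk (⟨a, haH⟩ : ↥H) : ↥H ⧸ K.subgroupOf H) ^ p = 1 := by
        rw [← QuotientGroup.mk_pow, QuotientGroup.eq_one_iff]
        exact Subgroup.mem_subgroupOf.2 (by
          have : (((⟨a, haH⟩ : ↥H) ^ p : ↥H) : X) = a ^ p := by push_cast; rfl
          rw [this]; exact haK)
      have hb' : (QuotientGroup.mk (⟨b, hbH⟩ : ↥H) : ↥H ⧸ K.subgroupOf H) ^ p = 1 := by
        rw [← QuotientGroup.mk_pow, QuotientGroup.eq_one_iff]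
        exact Subgroup.mem_subgroupOf.2 (by
          have : (((⟨b, hbH⟩ : ↥H) ^ p : ↥H) : X) = b ^ p := by push_cast; rfl
          rw [this]; exact hbK)
      rw [ha', hb', mul_one]
    rw [← QuotientGroup.mk_pow, QuotientGroup.eq_one_iff] at h1
    have := Subgroup.mem_subgroupOf.1 h1
    have hval : ((((⟨a, haH⟩ : ↥H) * ⟨b, hbH⟩) ^ p : ↥H) : X) = (a * b) ^ p := by push_cast; rfl
    rwa [hval] at this
  let L : Subgroup X :=
    { carrier := {x : X | x ∈ H ∧ x ^ p ∈ K}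
      one_mem' := ⟨one_mem H, by rw [one_pow]; exact one_mem K⟩
      mul_mem' := fun {a b} ha hb => ⟨mul_mem ha.1 hb.1, hpowmem a b ha.1 hb.1 ha.2 hb.2⟩
      inv_mem' := fun {a} ha => ⟨inv_mem ha.1, by rw [inv_pow]; exact inv_mem ha.2⟩ }
  have hLnormal : L.Normal := by
    constructor
    rintro x ⟨hx1, hx2⟩ g
    refine ⟨hH.conj_mem x hx1 g, ?_⟩
    rw [conj_pow]
    exact hK.conj_mem _ hx2 g
  have hKL : K ≤ L := fun x hx => ⟨hKH.le hx, pow_mem hx p⟩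
  have hLH : L ≤ H := fun x hx => hx.1
  have hLneK : L ≠ K := by
    obtain ⟨y, hy⟩ := QuotientGroup.mk'_surjective (K.subgroupOf H) q
    have hqy : (QuotientGroup.mk y : ↥H ⧸ K.subgroupOf H) = q := hy
    have hyp : (y : X) ^ p ∈ K := by
      have : (QuotientGroup.mk y : ↥H ⧸ K.subgroupOf H) ^ p = 1 := by
        rw [hqy, ← hq]; exact pow_orderOf_eq_one q
      rw [← QuotientGroup.mk_pow, QuotientGroup.eq_one_iff] at this
      have := Subgroup.mem_subgroupOf.1 this
      have hval : ((y ^ p : ↥H) : X) = (y : X) ^ p := by push_cast; rfl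
      rwa [hval] at this
    have hynotK : (y : X) ∉ K := by
      intro hyK
      have : (QuotientGroup.mk y : ↥H ⧸ K.subgroupOf H) = 1 := by
        rw [QuotientGroup.eq_one_iff]
        exact Subgroup.mem_subgroupOf.2 hyK
      rw [hqy] at this
      have h1 : orderOf q = 1 := orderOf_eq_one_iff.2 this
      rw [hq] at h1
      exact hp.ne_one h1
    intro hLK
    exact hynotK (hLK ▸ (⟨y.2, hyp⟩ : (y : X) ∈ L))
  have hLeq : L = H := (hmin L hLnormal hKL hLH).resolve_left hLneK
  have hexp : ∀ q' : ↥H ⧸ K.subgroupOf H, q' ^ p = 1 := by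
    intro q'
    obtain ⟨z, rfl⟩ := QuotientGroup.mk'_surjective _ q'
    have hz : (z : X) ∈ L := hLeq.symm ▸ z.2
    rw [QuotientGroup.mk'_apply, ← QuotientGroup.mk_pow, QuotientGroup.eq_one_iff]
    refine Subgroup.mem_subgroupOf.2 ?_
    have hval : ((z ^ p : ↥H) : X) = (z : X) ^ p := by push_cast; rfl
    rw [hval]
    exact hz.2
  -- conclude σ-primary
  obtain ⟨i, hi, _⟩ := hσ.existsUnique_mem p hp
  refine ⟨i, ?_⟩
  intro r hr hrdvd
  haveI : Fact r.Prime := ⟨hr⟩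
  obtain ⟨w, hw⟩ := exists_prime_orderOf_dvd_card (G := ↥H ⧸ K.subgroupOf H) r
    (by rw [← Nat.card_eq_fintype_card]; exact hrdvd)
  have : r ∣ p := hw ▸ orderOf_dvd_of_pow_eq_one (hexp w)
  rwa [(Nat.prime_dvd_prime_iff_eq hr hp).mp this]

end AuxLemmas2

/-- If `G` is a finite σ-SC-group with `G^{𝔖_σ} = G^{𝔘_σ}`, then
`G^{𝔖_σ} ≤ C_G(G_𝔖 ∩ G^{𝔑_σ})`. -/
theorem statement_16 {ι : Type*} (σ : ι → Set ℕ) (hσ : IsPrimePartition σ)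
    (G : Type*) [Group G] [Finite G]
    (hSC : IsSigmaSCGroup σ G)
    (hres : sigmaSolubleResidual σ G = sigmaSupersolubleResidual σ G) :
    sigmaSolubleResidual σ G ≤
      Subgroup.centralizer
        ((solubleRadical G ⊓ sigmaNilpotentResidual σ G : Subgroup G) : Set G) := by
  classical
  have hGradN : (solubleRadical G).Normal := mySSup_normal (fun N hN => hN.1)
  have hNresN : (sigmaNilpotentResidual σ G).Normal :=
    mySInf_normal (fun N hN => hN.choose)
  haveI hGradS : Group.IsSolvable ↥(solubleRadical G) := mySolubleRadical_solvable G
  set D := solubleRadical G ⊓ sigmaNilpotentResidual σ G with hD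
  have hDN : D.Normal := ⟨fun n hn g => ⟨hGradN.conj_mem n hn.1 g, hNresN.conj_mem n hn.2 g⟩⟩
  -- stabilization of the derived series
  obtain ⟨k0, hk0⟩ : ∃ k, derivedSeries G (k + 1) = derivedSeries G k := by
    by_contra hcon
    push_neg at hcon
    have hstep : ∀ k, ⁅derivedSeries G k, derivedSeries G k⁆ ≤ derivedSeries G k := by
      intro k
      rw [Subgroup.commutator_le]
      intro g1 h1 g2 h2
      rw [commutatorElement_def]
      exact mul_mem (mul_mem (mul_mem h1 h2) (inv_mem h1)) (inv_mem h2)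
    have hlt : ∀ k, Nat.card (derivedSeries G (k + 1)) < Nat.card (derivedSeries G k) := by
      intro k
      have hle : derivedSeries G (k + 1) ≤ derivedSeries G k := by
        rw [derivedSeries_succ]; exact hstep k
      by_contra hge
      push_neg at hge
      exact hcon k (Subgroup.eq_of_le_of_card_ge hle hge)
    have hdec : ∀ k, Nat.card (derivedSeries G k) + k ≤ Nat.card (derivedSeries G 0) := by
      intro k
      induction k with
      | zero => simp
      | succ k ih => have := hlt k; omega
    have h1 := hdec (Nat.card (derivedSeries G 0) + 1)
    have h2 : 0 < Nat.card (derivedSeries G (Nat.card (derivedSeries G 0) + 1)) := Nat.card_pos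
    omega
  have hTperf : ⁅derivedSeries G k0, derivedSeries G k0⁆ = derivedSeries G k0 :=
    (derivedSeries_succ G k0).symm.trans hk0
  -- the σ-soluble residual is contained in every term of the derived series
  haveI : (derivedSeries G k0).Normal := derivedSeries_normal G k0
  have hRT : sigmaSolubleResidual σ G ≤ derivedSeries G k0 := by
    apply sInf_le
    refine ⟨derivedSeries_normal G k0, ?_⟩
    haveI : IsSolvable (G ⧸ derivedSeries G k0) := by
      refine ⟨⟨k0, ?_⟩⟩
      have h1 := derivedSeries_le_map_derivedSeries
        (QuotientGroup.mk'_surjective (derivedSeries G k0)) k0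
      have h2 : Subgroup.map (QuotientGroup.mk' (derivedSeries G k0)) (derivedSeries G k0)
          = ⊥ := by
        rw [Subgroup.map_eq_bot_iff, QuotientGroup.ker_mk']
      exact le_bot_iff.mp (h1.trans h2.le)
    exact myIsSigmaSoluble_of_solvable hσ _ this
  -- main induction: the stable derived term centralizes every normal subgroup below D
  have main : ∀ n (N : Subgroup G), Nat.card N = n → N.Normal → N ≤ D →
      derivedSeries G k0 ≤ Subgroup.centralizer (N : Set G) := by
    intro n
    induction n using Nat.strong_induction_on with
    | _ n IH =>
    intro N hcard hNn hND
    rcases eq_or_ne N ⊥ with rfl | hNbot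
    · intro t _
      rw [Subgroup.mem_centralizer_iff]
      intro h hh
      have : h = 1 := by simpa using hh
      rw [this]; simp
    · -- choose a maximal proper normal subgroup of N
      have hSfin : ({M : Subgroup G | M.Normal ∧ M < N}).Finite := by
        haveI : Finite (Subgroup G) := Finite.of_injective _ SetLike.coe_injective
        exact Set.toFinite _
      have hSne : ({M : Subgroup G | M.Normal ∧ M < N}).Nonempty :=
        ⟨⊥, inferInstance, bot_lt_iff_ne_bot.mpr hNbot⟩
      obtain ⟨M, hMmem, hMmax⟩ := Set.Finite.exists_maximalFor
        (fun M : Subgroup G => Nat.card M) _ hSfin hSne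
      obtain ⟨hMn, hMN⟩ := hMmem
      haveI := hMn; haveI := hNn
      have hcardlt : Nat.card M < n := by
        rw [← hcard]
        have hle := Subgroup.card_le_of_le hMN.le
        rcases hle.lt_or_eq with h | h
        · exact h
        · exact absurd (Subgroup.eq_of_le_of_card_ge hMN.le h.ge) hMN.ne
      have hchief : IsChiefFactor G M N := by
        refine ⟨hMn, hNn, hMN, ?_⟩
        intro X hXn hMX hXN
        rcases eq_or_ne X N with h | h
        · right; exact h
        · left
          have hXlt : X < N := lt_of_le_of_ne hXN h
          have h1 : Nat.card M ≤ Nat.card X := Subgroup.card_le_of_le hMX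
          have h2 : Nat.card M = Nat.card X := le_antisymm h1 (hMmax ⟨hXn, hXlt⟩ h1)
          exact (Subgroup.eq_of_le_of_card_ge hMX h2.ge).symm
      haveI : (M.subgroupOf N).Normal := Subgroup.normal_subgroupOf
      haveI hsimple : IsSimpleGroup (↥N ⧸ M.subgroupOf N) :=
        hSC M N hchief (hND.trans inf_le_right)
      haveI : Group.IsSolvable ↥N :=
        solvable_of_solvable_injective (Subgroup.inclusion_injective (hND.trans inf_le_left))
      haveI : Group.IsSolvable (↥N ⧸ M.subgroupOf N) :=
        solvable_of_surjective (QuotientGroup.mk'_surjective _)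
      haveI hcyc : IsCyclic (↥N ⧸ M.subgroupOf N) :=
        myIsCyclic_of_simple_solvable _
      -- conjugation acts on the chief factor by a power map
      have claimA : ∀ g : G, ∃ k : ℤ, ∀ x : ↥N,
          (QuotientGroup.mk (myConjHom N hNn g x) : ↥N ⧸ M.subgroupOf N)
            = (QuotientGroup.mk x) ^ k := by
        intro g
        obtain ⟨q0, hq0⟩ := IsCyclic.exists_generator (α := ↥N ⧸ M.subgroupOf N)
        have hker : M.subgroupOf N ≤
            ((QuotientGroup.mk' (M.subgroupOf N)).comp (myConjHom N hNn g)).ker := by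
          intro x hx
          rw [MonoidHom.mem_ker, MonoidHom.comp_apply, QuotientGroup.mk'_apply,
            QuotientGroup.eq_one_iff]
          exact Subgroup.mem_subgroupOf.2
            (hMn.conj_mem _ (Subgroup.mem_subgroupOf.1 hx) g)
        set ψ := QuotientGroup.lift (M.subgroupOf N)
          ((QuotientGroup.mk' (M.subgroupOf N)).comp (myConjHom N hNn g)) hker with hψ
        obtain ⟨k, hk⟩ := Subgroup.mem_zpowers_iff.mp (hq0 (ψ q0))
        refine ⟨k, fun x => ?_⟩
        have h1 : ψ (QuotientGroup.mk x) = QuotientGroup.mk (myConjHom N hNn g x) := by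
          rw [hψ]
          exact QuotientGroup.lift_mk' _ _ x
        obtain ⟨m, hm⟩ := Subgroup.mem_zpowers_iff.mp (hq0 (QuotientGroup.mk x))
        calc (QuotientGroup.mk (myConjHom N hNn g x) : ↥N ⧸ M.subgroupOf N)
            = ψ (QuotientGroup.mk x) := h1.symm
          _ = ψ (q0 ^ m) := by rw [hm]
          _ = (ψ q0) ^ m := map_zpow ψ q0 m
          _ = (q0 ^ k) ^ m := by rw [hk]
          _ = (q0 ^ m) ^ k := by rw [← zpow_mul, ← zpow_mul, mul_comm]
          _ = (QuotientGroup.mk x) ^ k := by rw [hm]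
      have key : ∀ a b : G, ∀ x : ↥N,
          (QuotientGroup.mk (myConjHom N hNn (a * b) x) : ↥N ⧸ M.subgroupOf N)
            = QuotientGroup.mk (myConjHom N hNn (b * a) x) := by
        intro a b x
        obtain ⟨ka, hka⟩ := claimA a
        obtain ⟨kb, hkb⟩ := claimA b
        simp only [myConjHom_comp, hka, hkb, ← zpow_mul]
        rw [mul_comm]
      have hcomm_in : ∀ a b : G, ∀ x : G, x ∈ N → ⁅a, b⁆ * x * ⁅a, b⁆⁻¹ * x⁻¹ ∈ M := by
        intro a b x hx
        have h1 := key a b (myConjHom N hNn (b * a)⁻¹ ⟨x, hx⟩)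
        have h2 : myConjHom N hNn (b * a) (myConjHom N hNn (b * a)⁻¹ ⟨x, hx⟩) = ⟨x, hx⟩ := by
          ext
          rw [myConjHom_coe, myConjHom_coe]
          group
        rw [h2] at h1
        rw [QuotientGroup.eq] at h1
        have h3 := Subgroup.mem_subgroupOf.1 h1
        have h4 : (((myConjHom N hNn (a * b) (myConjHom N hNn (b * a)⁻¹ ⟨x, hx⟩))⁻¹
            * (⟨x, hx⟩ : ↥N) : ↥N) : G)
            = (⁅a, b⁆ * x * ⁅a, b⁆⁻¹)⁻¹ * x := by
          push_cast [myConjHom_coe]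
          rw [commutatorElement_def]
          group
        rw [h4] at h3
        have h5 : x⁻¹ * (⁅a, b⁆ * x * ⁅a, b⁆⁻¹) ∈ M := by
          have := inv_mem h3
          have heq : ((⁅a, b⁆ * x * ⁅a, b⁆⁻¹)⁻¹ * x)⁻¹ = x⁻¹ * (⁅a, b⁆ * x * ⁅a, b⁆⁻¹) := by
            group
          rwa [heq] at this
        have h6 := hMn.conj_mem _ h5 x
        have heq : x * (x⁻¹ * (⁅a, b⁆ * x * ⁅a, b⁆⁻¹)) * x⁻¹
            = ⁅a, b⁆ * x * ⁅a, b⁆⁻¹ * x⁻¹ := by group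
        rwa [heq] at h6
      -- the subgroup of elements acting trivially on the chief factor
      let Cstar : Subgroup G :=
        { carrier := {g : G | ∀ x : G, x ∈ N → g * x * g⁻¹ * x⁻¹ ∈ M}
          one_mem' := by
            intro x hx
            have : (1 : G) * x * 1⁻¹ * x⁻¹ = 1 := by group
            rw [this]; exact one_mem M
          mul_mem' := by
            intro a b ha hb x hx
            have h1 : b * x * b⁻¹ * x⁻¹ ∈ M := hb x hx
            have hbx : b * x * b⁻¹ ∈ N := hNn.conj_mem x hx b
            have h2 : a * (b * x * b⁻¹) * a⁻¹ * (b * x * b⁻¹)⁻¹ ∈ M := ha _ hbx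
            have heq : (a * b) * x * (a * b)⁻¹ * x⁻¹
                = (a * (b * x * b⁻¹) * a⁻¹ * (b * x * b⁻¹)⁻¹) * (b * x * b⁻¹ * x⁻¹) := by
              group
            rw [heq]; exact mul_mem h2 h1
          inv_mem' := by
            intro a ha x hx
            have hx' : a⁻¹ * x * a ∈ N := by
              have := hNn.conj_mem x hx a⁻¹
              simpa [mul_assoc] using this
            have h1 := ha _ hx'
            have h2 : (a * (a⁻¹ * x * a) * a⁻¹ * (a⁻¹ * x * a)⁻¹)⁻¹
                = a⁻¹ * x * a * x⁻¹ := by group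
            have h3 := inv_mem h1
            rw [h2] at h3
            have heq : a⁻¹ * x * (a⁻¹)⁻¹ * x⁻¹ = a⁻¹ * x * a * x⁻¹ := by group
            rw [heq]
            exact h3 }
      have hGG_Cstar : ⁅(⊤ : Subgroup G), ⊤⁆ ≤ Cstar := by
        rw [Subgroup.commutator_le]
        intro a _ b _
        intro x hx
        exact hcomm_in a b x hx
      set A := Subgroup.centralizer (M : Set G) ⊓ Cstar with hA
      have hTA : derivedSeries G k0 ≤ A := by
        refine le_inf (IH (Nat.card M) hcardlt M rfl hMn (hMN.le.trans hND)) ?_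
        calc derivedSeries G k0 = ⁅derivedSeries G k0, derivedSeries G k0⁆ := hTperf.symm
          _ ≤ ⁅(⊤ : Subgroup G), ⊤⁆ := Subgroup.commutator_mono le_top le_top
          _ ≤ Cstar := hGG_Cstar
      have h1 : ⁅A, N⁆ ≤ M := by
        rw [Subgroup.commutator_le]
        intro a ha x hx
        rw [commutatorElement_def]
        exact ha.2 x hx
      have h2 : ⁅N, A⁆ ≤ M := by
        rw [Subgroup.commutator_le]
        intro x hx a ha
        have hainv : a⁻¹ ∈ Cstar := inv_mem ha.2
        have h3 := hainv x hx
        have h4 := hMn.conj_mem _ h3 a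
        have heq : a * (a⁻¹ * x * (a⁻¹)⁻¹ * x⁻¹) * a⁻¹ = x * a * x⁻¹ * a⁻¹ := by group
        rw [heq] at h4
        rw [commutatorElement_def]
        exact h4
      have hMA_bot : ⁅M, A⁆ = ⊥ := by
        rw [eq_bot_iff, Subgroup.commutator_le]
        intro m hm a ha
        rw [Subgroup.mem_bot, commutatorElement_eq_one_iff_mul_comm]
        exact Subgroup.mem_centralizer_iff.1 ha.1 m hm
      have h3 : ⁅⁅A, N⁆, A⁆ = ⊥ := by
        rw [eq_bot_iff]
        calc ⁅⁅A, N⁆, A⁆ ≤ ⁅M, A⁆ := Subgroup.commutator_mono h1 le_rfl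
          _ = ⊥ := hMA_bot
      have h4 : ⁅⁅N, A⁆, A⁆ = ⊥ := by
        rw [eq_bot_iff]
        calc ⁅⁅N, A⁆, A⁆ ≤ ⁅M, A⁆ := Subgroup.commutator_mono h2 le_rfl
          _ = ⊥ := hMA_bot
      have h5 : ⁅⁅A, A⁆, N⁆ = ⊥ := Subgroup.commutator_commutator_eq_bot_of_rotate h3 h4
      intro t ht
      rw [Subgroup.mem_centralizer_iff]
      intro x hx
      have htA : t ∈ ⁅A, A⁆ := by
        have : derivedSeries G k0 ≤ ⁅A, A⁆ :=
          hTperf.symm.le.trans (Subgroup.commutator_mono hTA hTA)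
        exact this ht
      have hcomm1 : ⁅t, x⁆ ∈ ⁅⁅A, A⁆, N⁆ := Subgroup.commutator_mem_commutator htA hx
      rw [h5, Subgroup.mem_bot, commutatorElement_eq_one_iff_mul_comm] at hcomm1
      exact hcomm1.symm
  exact hRT.trans (main (Nat.card D) D rfl hDN le_rfl)
end

section
/- Let σ be a partition of the primes and let G be a finite σ-full group in which σ-permutability is transitive (a PσT-group). Then for every normal subgroup R of G and every i, the quotient G/R satisfies N_{σ_i}: whenever N is a soluble normal subgroup of G/R, every σ_i'-element of G/R induces a power automorphism on O_{σ_i}((G/R)/N). -/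
open Subgroup
open scoped Pointwise

/-- `X` satisfies `N_{σ i}`: whenever `N` is a soluble normal subgroup of `X`,
every `σ i'`-element of `X` induces a power automorphism on `O_{σ i}(X/N)`. -/
def SatisfiesNSigma {ι : Type*} (σ : ι → Set ℕ) (i : ι) (X : Type*) [Group X] : Prop :=
  ∀ N : Subgroup X, ∀ hN : N.Normal, IsSolvable ↥N →
    ∀ x : X, (∀ p : ℕ, p.Prime → p ∣ orderOf x → p ∉ σ i) →
      letI := hN;
      ∀ a : X ⧸ N, a ∈ sigmaCore σ i (X ⧸ N) →
        (QuotientGroup.mk' N x) * a * (QuotientGroup.mk' N x)⁻¹ ∈ Subgroup.zpowers a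


section Aux

variable {ι : Type*} {σ : ι → Set ℕ} {i : ι}

lemma block_disjoint (hσ : IsPrimePartition σ) {i j : ι} (hij : j ≠ i) {p : ℕ}
    (hp : p.Prime) (h1 : p ∈ σ j) (h2 : p ∈ σ i) : False := by
  obtain ⟨k, _, huniq⟩ := hσ.existsUnique_mem p hp
  exact hij ((huniq j h1).trans (huniq i h2).symm)

lemma eq_one_of_no_primes {n : ℕ} (hn : n ≠ 0) (h : ∀ p : ℕ, p.Prime → p ∣ n → False) :
    n = 1 := by
  by_contra h1
  obtain ⟨p, hp, hd⟩ := Nat.exists_prime_and_dvd h1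
  exact h p hp hd

lemma isSigmaIGroup_of_orders {Q : Type*} [Group Q] [Finite Q]
    (h : ∀ g : Q, IsSigmaNumber σ i (orderOf g)) : IsSigmaIGroup σ i Q := by
  intro p hp hd
  have : Fact p.Prime := ⟨hp⟩
  obtain ⟨g, hg⟩ := exists_prime_orderOf_dvd_card' (G := Q) p hd
  exact h g p hp (hg ▸ dvd_rfl)

lemma eq_one_of_order_both {Q : Type*} [Group Q] [Finite Q] {g : Q}
    (h1 : IsSigmaNumber σ i (orderOf g)) (h2 : ∀ p : ℕ, p.Prime → p ∣ orderOf g → p ∉ σ i) :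
    g = 1 := by
  have : orderOf g = 1 :=
    eq_one_of_no_primes (orderOf_pos g).ne' (fun p hp hd => h2 p hp hd (h1 p hp hd))
  exact orderOf_eq_one_iff.mp this

lemma permutes_of_normal {G : Type*} [Group G] {A : Subgroup G} (hA : A.Normal)
    (B : Subgroup G) : Permutes A B := by
  ext x
  simp only [Set.mem_mul]
  constructor
  · rintro ⟨a, ha, b, hb, rfl⟩
    exact ⟨b, hb, b⁻¹ * a * b⁻¹⁻¹, hA.conj_mem a ha b⁻¹, by group⟩
  · rintro ⟨b, hb, a, ha, rfl⟩
    exact ⟨b * a * b⁻¹, hA.conj_mem a ha b, b, hb, by group⟩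

lemma permutes_top {G : Type*} [Group G] (B : Subgroup G) :
    Permutes (⊤ : Subgroup G) B := by
  have h1 : ((⊤ : Subgroup G) : Set G) * (B : Set G) = Set.univ :=
    Set.eq_univ_of_forall (fun x => ⟨x, trivial, 1, B.one_mem, mul_one x⟩)
  have h2 : (B : Set G) * ((⊤ : Subgroup G) : Set G) = Set.univ :=
    Set.eq_univ_of_forall (fun x => ⟨1, B.one_mem, x, trivial, one_mul x⟩)
  rw [Permutes, h1, h2]

lemma isSigmaPermutable_top {G : Type*} [Group G] :
    IsSigmaPermutable σ (⊤ : Subgroup G) :=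
  fun _ H _ => permutes_top H

/-- one sigma-subnormal step implies sigma-permutability in the bigger group -/
lemma step_perm (hσ : IsPrimePartition σ) {H : Type*} [Group H] [Finite H] (A : Subgroup H)
    (hc : A.Normal ∨ IsSigmaPrimary σ (H ⧸ A.normalCore)) :
    IsSigmaPermutable σ A := by
  rcases hc with hA | ⟨k, hk⟩
  · exact fun _ L _ => permutes_of_normal hA L
  intro j L hL
  by_cases hjk : j = k
  · subst hjk
    have htop : A.normalCore ⊔ L = ⊤ := by
      rw [← Subgroup.index_eq_one]
      refine eq_one_of_no_primes Subgroup.index_ne_zero_of_finite (fun p hp hd => ?_)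
      have h1 : p ∣ L.index := hd.trans (Subgroup.index_dvd_of_le le_sup_right)
      have h2 : p ∣ A.normalCore.index := hd.trans (Subgroup.index_dvd_of_le le_sup_left)
      rw [Subgroup.index_eq_card] at h2
      exact hL.2 p hp h1 (hk p hp h2)
    have hsub : (A.normalCore : Set H) ⊆ ↑A := A.normalCore_le
    have e1 : (A.normalCore : Set H) * (L : Set H) = Set.univ := by
      rw [← Subgroup.normal_mul, htop, Subgroup.coe_top]
    have e2 : (L : Set H) * (A.normalCore : Set H) = Set.univ := by
      rw [← Subgroup.mul_normal, sup_comm, htop, Subgroup.coe_top]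
    have eA1 : (A : Set H) * (L : Set H) = Set.univ :=
      Set.eq_univ_of_univ_subset (e1 ▸ Set.mul_subset_mul_right hsub)
    have eA2 : (L : Set H) * (A : Set H) = Set.univ :=
      Set.eq_univ_of_univ_subset (e2 ▸ Set.mul_subset_mul_left hsub)
    rw [Permutes, eA1, eA2]
  · have hLle : L ≤ A.normalCore := by
      intro g hg
      rw [← QuotientGroup.eq_one_iff]
      refine eq_one_of_order_both (σ := σ) (i := k) ?_ ?_
      · exact fun p hp hd => hk p hp (hd.trans (orderOf_dvd_natCard _))
      · intro p hp hd hpk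
        have hdg : p ∣ orderOf g :=
          hd.trans (orderOf_map_dvd (QuotientGroup.mk' A.normalCore) g)
        have : p ∣ Nat.card L := hdg.trans (Subgroup.orderOf_dvd_natCard L hg)
        exact block_disjoint hσ hjk hp (hL.1 p hp this) hpk
    have hsub : (L : Set H) ⊆ ↑A := fun x hx => A.normalCore_le (hLle hx)
    have e1 : (A : Set H) * (L : Set H) = (A : Set H) := by
      apply Set.Subset.antisymm
      · rintro x ⟨a, ha, b, hb, rfl⟩
        exact A.mul_mem ha (hsub hb)
      · intro x hx
        exact ⟨x, hx, 1, L.one_mem, mul_one x⟩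
    have e2 : (L : Set H) * (A : Set H) = (A : Set H) := by
      apply Set.Subset.antisymm
      · rintro x ⟨b, hb, a, ha, rfl⟩
        exact A.mul_mem (hsub hb) ha
      · intro x hx
        exact ⟨1, L.one_mem, x, hx, one_mul x⟩
    rw [Permutes, e1, e2]

/-- in a PσT-group every σ-subnormal subgroup is σ-permutable. -/
lemma perm_of_subnormal (hσ : IsPrimePartition σ) {G : Type*} [Group G] [Finite G]
    (hPT : IsPSigmaTGroup σ G) {A : Subgroup G} (h : IsSigmaSubnormal σ A) :
    IsSigmaPermutable σ A := by
  obtain ⟨n, C, h0, hl, hs⟩ := h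
  have key : ∀ m : Fin (n + 1), IsSigmaPermutable σ (C m) := by
    refine Fin.reverseInduction ?_ (fun k ih => ?_)
    · rw [hl]; exact isSigmaPermutable_top
    · exact hPT (C k.succ) (C k.castSucc) (hs k).1 (step_perm hσ _ (hs k).2) ih
  exact h0 ▸ key 0

lemma normal_sSup {G : Type*} [Group G] {s : Set (Subgroup G)} (h : ∀ N ∈ s, N.Normal) :
    (sSup s).Normal := by
  constructor
  intro n hn g
  have hle : sSup s ≤ Subgroup.comap (MulAut.conj g).toMonoidHom (sSup s) := by
    refine sSup_le (fun N hN => fun x hx => Subgroup.mem_comap.mpr (le_sSup hN ?_))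
    simpa [MulAut.conj_apply] using (h N hN).conj_mem x hx g
  simpa [MulAut.conj_apply] using Subgroup.mem_comap.mp (hle hn)

lemma card_sup_dvd {G : Type*} [Group G] [Finite G] (H N : Subgroup G) (hN : N.Normal) :
    Nat.card ↥(H ⊔ N) ∣ Nat.card H * Nat.card N := by
  letI := hN
  have h1 : Nat.card ↥(H ⊔ N) =
      Nat.card ((↥(H ⊔ N)) ⧸ N.subgroupOf (H ⊔ N)) * Nat.card (N.subgroupOf (H ⊔ N)) :=
    Subgroup.card_eq_card_quotient_mul_card_subgroup _
  have h2 : Nat.card (N.subgroupOf (H ⊔ N)) = Nat.card N :=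
    Nat.card_congr (Subgroup.subgroupOfEquivOfLe le_sup_right).toEquiv
  have h3 : Nat.card ((↥(H ⊔ N)) ⧸ N.subgroupOf (H ⊔ N)) = Nat.card (↥H ⧸ N.subgroupOf H) :=
    (Nat.card_congr (QuotientGroup.quotientInfEquivProdNormalQuotient H N).toEquiv).symm
  have h4 : Nat.card (↥H ⧸ N.subgroupOf H) ∣ Nat.card H := by
    rw [← Subgroup.index_eq_card]
    exact Subgroup.index_dvd_card (N.subgroupOf H)
  rw [h1, h2, h3]
  exact mul_dvd_mul h4 dvd_rfl

lemma finite_subgroups {G : Type*} [Group G] [Finite G] : Finite (Subgroup G) :=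
  Finite.of_injective (fun H => (H : Set G)) SetLike.coe_injective

lemma sigmaCore_normal {Y : Type*} [Group Y] : (sigmaCore σ i Y).Normal := by
  unfold sigmaCore
  exact normal_sSup (fun _ hN => hN.1)

lemma sigmaCore_sigmaI {Y : Type*} [Group Y] [Finite Y] :
    IsSigmaIGroup σ i ↥(sigmaCore σ i Y) := by
  classical
  have : Finite (Subgroup Y) := finite_subgroups
  set s := {N : Subgroup Y | N.Normal ∧ IsSigmaIGroup σ i ↥N} with hs
  have hfin : s.Finite := Set.toFinite s
  have hsup : sigmaCore σ i Y = hfin.toFinset.sup id := by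
    unfold sigmaCore
    apply le_antisymm
    · exact sSup_le (fun N hN => Finset.le_sup (f := (id : Subgroup Y → Subgroup Y)) (hfin.mem_toFinset.mpr hN))
    · exact Finset.sup_le (fun N hN => le_sSup (hfin.mem_toFinset.mp hN))
  have key : ((hfin.toFinset.sup id).Normal ∧ IsSigmaIGroup σ i ↥(hfin.toFinset.sup id)) := by
    refine Finset.sup_induction (p := fun K : Subgroup Y => K.Normal ∧ IsSigmaIGroup σ i ↥K) ?_ ?_ ?_
    · refine ⟨inferInstance, fun p hp hd => ?_⟩
      have hb : Nat.card (↥(⊥ : Subgroup Y)) = 1 := by simp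
      rw [hb] at hd
      exact absurd (Nat.dvd_one.mp hd) hp.one_lt.ne'
    · rintro a ⟨ha1, ha2⟩ b ⟨hb1, hb2⟩
      haveI := ha1; haveI := hb1
      refine ⟨Subgroup.sup_normal a b, fun p hp hd => ?_⟩
      rcases (Nat.Prime.dvd_mul hp).mp (hd.trans (card_sup_dvd a b hb1)) with h | h
      · exact ha2 p hp h
      · exact hb2 p hp h
    · intro N hN
      exact hfin.mem_toFinset.mp hN
  rw [hsup]
  exact key.2


lemma coe_sup_of_permutes {Y : Type*} [Group Y] {A B : Subgroup Y} (h : Permutes A B) :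
    ((A ⊔ B : Subgroup Y) : Set Y) = (A : Set Y) * (B : Set Y) := by
  have hW : ∃ W : Subgroup Y, (W : Set Y) = (A : Set Y) * (B : Set Y) := by
    refine ⟨{ carrier := (A : Set Y) * (B : Set Y)
              one_mem' := ⟨1, A.one_mem, 1, B.one_mem, one_mul 1⟩
              mul_mem' := ?_
              inv_mem' := ?_ }, rfl⟩
    · rintro x y ⟨a, ha, b, hb, rfl⟩ ⟨a', ha', b', hb', rfl⟩
      have hba : (b : Y) * a' ∈ (A : Set Y) * (B : Set Y) := by
        rw [h]
        exact ⟨b, hb, a', ha', rfl⟩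
      obtain ⟨a₂, ha₂, b₂, hb₂, heq⟩ := hba
      refine ⟨a * a₂, A.mul_mem ha ha₂, b₂ * b', B.mul_mem hb₂ hb', ?_⟩
      calc a * a₂ * (b₂ * b') = a * (a₂ * b₂) * b' := by group
        _ = a * (b * a') * b' := by rw [show a₂ * b₂ = b * a' from heq]
        _ = a * b * (a' * b') := by group
    · rintro x ⟨a, ha, b, hb, rfl⟩
      have : (b : Y)⁻¹ * a⁻¹ ∈ (A : Set Y) * (B : Set Y) := by
        rw [h]
        exact ⟨b⁻¹, B.inv_mem hb, a⁻¹, A.inv_mem ha, rfl⟩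
      simpa [mul_inv_rev] using this
  obtain ⟨W, hWeq⟩ := hW
  have hle : A ⊔ B = W := by
    apply le_antisymm
    · refine sup_le (fun x hx => ?_) (fun x hx => ?_)
      · have : x ∈ (W : Set Y) := hWeq ▸ ⟨x, hx, 1, B.one_mem, mul_one x⟩
        exact this
      · have : x ∈ (W : Set Y) := hWeq ▸ ⟨1, A.one_mem, x, hx, one_mul x⟩
        exact this
    · intro x hx
      have : x ∈ (A : Set Y) * (B : Set Y) := hWeq ▸ hx
      obtain ⟨a, ha, b, hb, rfl⟩ := this
      exact Subgroup.mul_mem _ (Subgroup.mem_sup_left ha) (Subgroup.mem_sup_right hb)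
  rw [hle, hWeq]

lemma index_subgroupOf_sup_dvd {Y : Type*} [Group Y] [Finite Y] {A B : Subgroup Y}
    (h : Permutes A B) : (A.subgroupOf (A ⊔ B)).index ∣ Nat.card B := by
  have h' : (A : Set Y) * (B : Set Y) = (B : Set Y) * (A : Set Y) := h
  have hBW : B ≤ A ⊔ B := le_sup_right
  have hrel : ∀ b b' : ↥B, (QuotientGroup.leftRel (A.subgroupOf B)) b b' →
      (QuotientGroup.leftRel (A.subgroupOf (A ⊔ B)))
        (⟨(b : Y), hBW b.2⟩ : ↥(A ⊔ B)) ⟨(b' : Y), hBW b'.2⟩ := by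
    intro b b' hbb
    rw [QuotientGroup.leftRel_apply] at hbb ⊢
    exact Subgroup.mem_subgroupOf.mpr (Subgroup.mem_subgroupOf.mp hbb)
  let f : (↥B ⧸ A.subgroupOf B) → (↥(A ⊔ B) ⧸ A.subgroupOf (A ⊔ B)) :=
    Quotient.map' (fun b => (⟨(b : Y), hBW b.2⟩ : ↥(A ⊔ B))) hrel
  have hinj : Function.Injective f := by
    intro u v
    induction u using Quotient.inductionOn' with
    | h b =>
    induction v using Quotient.inductionOn' with
    | h b' =>
    intro huv
    have hx : (QuotientGroup.leftRel (A.subgroupOf (A ⊔ B)))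
        (⟨(b : Y), hBW b.2⟩ : ↥(A ⊔ B)) ⟨(b' : Y), hBW b'.2⟩ := Quotient.exact' huv
    rw [QuotientGroup.leftRel_apply] at hx
    apply Quotient.sound'
    rw [QuotientGroup.leftRel_apply]
    exact Subgroup.mem_subgroupOf.mpr (Subgroup.mem_subgroupOf.mp hx)
  have hsurj : Function.Surjective f := by
    intro w
    induction w using Quotient.inductionOn' with
    | h w =>
    have hw : (w : Y) ∈ ((A ⊔ B : Subgroup Y) : Set Y) := w.2
    rw [coe_sup_of_permutes h, h'] at hw
    obtain ⟨b, hb, a, ha, hba⟩ := hw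
    refine ⟨Quotient.mk'' ⟨b, hb⟩, ?_⟩
    apply Quotient.sound'
    rw [QuotientGroup.leftRel_apply]
    refine Subgroup.mem_subgroupOf.mpr ?_
    show (b : Y)⁻¹ * (w : Y) ∈ A
    have hba' : (b : Y)⁻¹ * (w : Y) = a := by rw [← hba]; group
    rw [hba']
    exact ha
  calc (A.subgroupOf (A ⊔ B)).index
      = Nat.card (↥(A ⊔ B) ⧸ A.subgroupOf (A ⊔ B)) := Subgroup.index_eq_card _
    _ = Nat.card (↥B ⧸ A.subgroupOf B) := (Nat.card_eq_of_bijective f ⟨hinj, hsurj⟩).symm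
    _ = (A.subgroupOf B).index := (Subgroup.index_eq_card _).symm
    _ ∣ Nat.card B := Subgroup.index_dvd_card _


lemma mem_of_sigma_order {W : Type*} [Group W] [Finite W] {A B : Subgroup W}
    (hAB : A ≤ B) (hnorm : (A.subgroupOf B).Normal)
    (hAidx : ∀ p : ℕ, p.Prime → p ∣ A.index → p ∉ σ i)
    {g : W} (hg : g ∈ B) (hord : IsSigmaNumber σ i (orderOf g)) : g ∈ A := by
  letI := hnorm
  set gq : ↥B ⧸ A.subgroupOf B := ((⟨g, hg⟩ : ↥B) : ↥B ⧸ A.subgroupOf B) with hgq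
  have hog : orderOf (⟨g, hg⟩ : ↥B) = orderOf g :=
    (orderOf_injective B.subtype Subtype.coe_injective ⟨g, hg⟩).symm
  have h1 : IsSigmaNumber σ i (orderOf gq) := by
    intro p hp hd
    refine hord p hp (hd.trans ?_)
    rw [← hog]
    exact orderOf_map_dvd (QuotientGroup.mk' (A.subgroupOf B)) _
  have h2 : ∀ p : ℕ, p.Prime → p ∣ orderOf gq → p ∉ σ i := by
    intro p hp hd
    have hdq : orderOf gq ∣ (A.subgroupOf B).index := by
      rw [Subgroup.index_eq_card]
      exact orderOf_dvd_natCard _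
    have hre : (A.subgroupOf B).index ∣ A.index :=
      ⟨B.index, (Subgroup.relIndex_mul_index hAB).symm⟩
    exact hAidx p hp ((hd.trans hdq).trans hre)
  have : gq = 1 := eq_one_of_order_both h1 h2
  exact Subgroup.mem_subgroupOf.mp ((QuotientGroup.eq_one_iff _).mp this)

lemma orderOf_conj_eq {W : Type*} [Group W] (g x : W) :
    orderOf (g * x * g⁻¹) = orderOf x := by
  have := (MulAut.conj g).orderOf_eq x
  simpa [MulAut.conj_apply] using this

/-- a σ-subnormal subgroup which is a Hall σ i-subgroup is normal. -/
lemma normal_of_hall_subnormal (hσ : IsPrimePartition σ) {W : Type*} [Group W] [Finite W]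
    {A : Subgroup W} (hAcard : IsSigmaNumber σ i (Nat.card A))
    (hAidx : ∀ p : ℕ, p.Prime → p ∣ A.index → p ∉ σ i)
    (hsub : IsSigmaSubnormal σ A) : A.Normal := by
  obtain ⟨n, C, h0, hl, hs⟩ := hsub
  have hordA : ∀ a ∈ A, IsSigmaNumber σ i (orderOf a) := by
    intro a ha p hp hd
    exact hAcard p hp (hd.trans (Subgroup.orderOf_dvd_natCard A ha))
  have key : ∀ m : Fin (n + 1), A ≤ C m ∧ (A.subgroupOf (C m)).Normal := by
    intro m
    induction m using Fin.induction with
    | zero =>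
      refine ⟨h0 ▸ le_rfl, ?_⟩
      rw [h0, Subgroup.subgroupOf_self]
      infer_instance
    | succ k ih =>
      obtain ⟨hle, hnorm⟩ := ih
      obtain ⟨hstep, hcase⟩ := hs k
      have hleS : A ≤ C k.succ := hle.trans hstep
      have hmem : ∀ g ∈ C k.castSucc, IsSigmaNumber σ i (orderOf g) → g ∈ A :=
        fun g hg ho => mem_of_sigma_order hle hnorm hAidx hg ho
      rcases hcase with hN | ⟨t, ht⟩
      · -- C castSucc normal in C succ
        refine ⟨hleS, ⟨?_⟩⟩
        rintro ⟨x, hxS⟩ hx g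
        have hxA : x ∈ A := Subgroup.mem_subgroupOf.mp hx
        have hconj : (g : W) * x * (g : W)⁻¹ ∈ C k.castSucc := by
          have := hN.conj_mem ⟨x, hxS⟩ (Subgroup.mem_subgroupOf.mpr (hle hxA)) g
          exact Subgroup.mem_subgroupOf.mp this
        refine Subgroup.mem_subgroupOf.mpr ?_
        show (g : W) * x * (g : W)⁻¹ ∈ A
        refine hmem _ hconj ?_
        rw [orderOf_conj_eq]
        exact hordA x hxA
      · set K := ((C k.castSucc).subgroupOf (C k.succ)).normalCore with hK
        by_cases hti : t = i
        · -- show C k.succ = C k.castSucc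
          subst hti
          have htop : A.subgroupOf (C k.succ) ⊔ K = ⊤ := by
            rw [← Subgroup.index_eq_one]
            refine eq_one_of_no_primes Subgroup.index_ne_zero_of_finite (fun p hp hd => ?_)
            have h1 : p ∣ (A.subgroupOf (C k.succ)).index :=
              hd.trans (Subgroup.index_dvd_of_le le_sup_left)
            have h2 : p ∣ K.index := hd.trans (Subgroup.index_dvd_of_le le_sup_right)
            rw [Subgroup.index_eq_card] at h2
            have hrel : (A.subgroupOf (C k.succ)).index ∣ A.index :=
              ⟨(C k.succ).index, (Subgroup.relIndex_mul_index hleS).symm⟩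
            exact hAidx p hp (h1.trans hrel) (ht p hp h2)
          have hCeq : C k.succ = C k.castSucc := by
            apply le_antisymm _ hstep
            rw [← Subgroup.subgroupOf_eq_top, ← top_le_iff, ← htop]
            refine sup_le ?_ (Subgroup.normalCore_le _)
            intro x hx
            exact Subgroup.mem_subgroupOf.mpr (hle (Subgroup.mem_subgroupOf.mp hx))
          refine ⟨hleS, ?_⟩
          rw [hCeq]
          exact hnorm
        · -- t ≠ i : A.subgroupOf (C k.succ) ≤ K
          have hAK : A.subgroupOf (C k.succ) ≤ K := by
            intro x hx
            have hxA : (x : W) ∈ A := Subgroup.mem_subgroupOf.mp hx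
            rw [← QuotientGroup.eq_one_iff]
            refine eq_one_of_order_both (σ := σ) (i := t) ?_ ?_
            · intro p hp hd
              exact ht p hp (hd.trans (orderOf_dvd_natCard _))
            · intro p hp hd hpt
              have hdx : p ∣ orderOf (x : W) := by
                refine hd.trans ((orderOf_map_dvd (QuotientGroup.mk' K) x).trans ?_)
                exact dvd_of_eq (orderOf_injective (C k.succ).subtype Subtype.coe_injective x).symm
              exact block_disjoint hσ hti hp hpt (hordA _ hxA p hp hdx)
          refine ⟨hleS, ⟨?_⟩⟩
          rintro ⟨x, hxS⟩ hx g
          have hxA : x ∈ A := Subgroup.mem_subgroupOf.mp hx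
          have hxK : (⟨x, hxS⟩ : ↥(C k.succ)) ∈ K := hAK hx
          have hcK : g * ⟨x, hxS⟩ * g⁻¹ ∈ K :=
            (Subgroup.normalCore_normal _).conj_mem _ hxK g
          have hconj : (g : W) * x * (g : W)⁻¹ ∈ C k.castSucc :=
            Subgroup.mem_subgroupOf.mp (Subgroup.normalCore_le _ hcK)
          refine Subgroup.mem_subgroupOf.mpr ?_
          show (g : W) * x * (g : W)⁻¹ ∈ A
          refine hmem _ hconj ?_
          rw [orderOf_conj_eq]
          exact hordA x hxA
  obtain ⟨hleT, hnormT⟩ := key (Fin.last n)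
  rw [hl] at hnormT
  constructor
  intro a ha g
  refine mem_of_sigma_order le_top hnormT hAidx (Subgroup.mem_top _) ?_
  rw [orderOf_conj_eq]
  exact hordA a ha


lemma hall_normalizes (hσ : IsPrimePartition σ) {Y : Type*} [Group Y] [Finite Y]
    {a : Y} (ha : a ∈ sigmaCore σ i Y) {B : Subgroup Y}
    (hB : ∀ p : ℕ, p.Prime → p ∣ Nat.card B → p ∉ σ i)
    (hperm : Permutes (Subgroup.zpowers a) B) :
    ∀ b ∈ B, b * a * b⁻¹ ∈ Subgroup.zpowers a := by
  haveI hDnorm : (sigmaCore σ i Y).Normal := sigmaCore_normal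
  have hDcard : IsSigmaIGroup σ i ↥(sigmaCore σ i Y) := sigmaCore_sigmaI
  have hZD : Subgroup.zpowers a ≤ sigmaCore σ i Y := Subgroup.zpowers_le.mpr ha
  set W := Subgroup.zpowers a ⊔ B with hW
  set A1 : Subgroup ↥W := (Subgroup.zpowers a).subgroupOf W with hA1
  set DW : Subgroup ↥W := (sigmaCore σ i Y).subgroupOf W with hDW
  have hA1card : IsSigmaNumber σ i (Nat.card A1) := by
    intro p hp hd
    have he : Nat.card A1 = Nat.card (Subgroup.zpowers a) :=
      Nat.card_congr (Subgroup.subgroupOfEquivOfLe le_sup_left).toEquiv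
    rw [he] at hd
    exact hDcard p hp (hd.trans (Subgroup.card_dvd_of_le hZD))
  have hA1idx : ∀ p : ℕ, p.Prime → p ∣ A1.index → p ∉ σ i := by
    intro p hp hd
    exact hB p hp (hd.trans (index_subgroupOf_sup_dvd hperm))
  have hsub : IsSigmaSubnormal σ A1 := by
    refine ⟨2, ![A1, DW, ⊤], rfl, rfl, ?_⟩
    intro k
    fin_cases k
    · refine ⟨?_, Or.inr ⟨i, isSigmaIGroup_of_orders (fun g => ?_)⟩⟩
      · intro x hx
        exact Subgroup.mem_subgroupOf.mpr (hZD (Subgroup.mem_subgroupOf.mp hx))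
      · refine QuotientGroup.induction_on g (fun (x : ↥DW) => ?_)
        intro p hp hd
        have h1 : orderOf ((x : ↥DW ⧸ (A1.subgroupOf DW).normalCore)) ∣ orderOf x :=
          orderOf_map_dvd (QuotientGroup.mk' ((A1.subgroupOf DW).normalCore)) x
        have h2 : orderOf x = orderOf (x : ↥W) :=
          (orderOf_injective DW.subtype Subtype.coe_injective x).symm
        have h3 : orderOf (x : ↥W) = orderOf ((x : ↥W) : Y) :=
          (orderOf_injective W.subtype Subtype.coe_injective _).symm
        have h4 : orderOf ((x : ↥W) : Y) ∣ Nat.card (sigmaCore σ i Y) :=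
          Subgroup.orderOf_dvd_natCard _ (Subgroup.mem_subgroupOf.mp x.2)
        exact hDcard p hp (((hd.trans h1).trans (h2.trans h3 ▸ dvd_rfl)).trans h4)
    · refine ⟨le_top, Or.inl ?_⟩
      haveI : DW.Normal := Subgroup.normal_subgroupOf
      exact Subgroup.Normal.subgroupOf this ⊤
  have hA1norm : A1.Normal := normal_of_hall_subnormal hσ hA1card hA1idx hsub
  intro b hb
  have hbW : b ∈ W := (le_sup_right : B ≤ W) hb
  have haW : a ∈ W := (le_sup_left : Subgroup.zpowers a ≤ W) (Subgroup.mem_zpowers a)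
  have haA1 : (⟨a, haW⟩ : ↥W) ∈ A1 := Subgroup.mem_subgroupOf.mpr (Subgroup.mem_zpowers a)
  have := hA1norm.conj_mem ⟨a, haW⟩ haA1 ⟨b, hbW⟩
  exact Subgroup.mem_subgroupOf.mp this

end Aux

/-- If `G` is a σ-full finite PσT-group, then every quotient `G/R` satisfies
`N_{σ i}` for every `i`. -/
theorem statement_17 {ι : Type*} (σ : ι → Set ℕ) (hσ : IsPrimePartition σ)
    {G : Type*} [Group G] [Finite G]
    (hfull : IsSigmaFull σ G) (hPT : IsPSigmaTGroup σ G)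
    (R : Subgroup G) [hR : R.Normal] (i : ι) :
    SatisfiesNSigma σ i (G ⧸ R) := by
  intro N hN _hsol x hx a haD
  letI := hN
  haveI : Finite (G ⧸ R) := Quotient.finite _
  haveI : Finite ((G ⧸ R) ⧸ N) := Quotient.finite _
  set π₁ : G →* G ⧸ R := QuotientGroup.mk' R with hπ₁
  set π₂ : (G ⧸ R) →* (G ⧸ R) ⧸ N := QuotientGroup.mk' N with hπ₂
  set π : G →* (G ⧸ R) ⧸ N := π₂.comp π₁ with hπdef
  have hπ₁s : Function.Surjective π₁ := QuotientGroup.mk'_surjective R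
  have hπ₂s : Function.Surjective π₂ := QuotientGroup.mk'_surjective N
  have hπs : Function.Surjective π := hπ₂s.comp hπ₁s
  haveI hDnorm : (sigmaCore σ i ((G ⧸ R) ⧸ N)).Normal := sigmaCore_normal
  have hDcard : IsSigmaIGroup σ i ↥(sigmaCore σ i ((G ⧸ R) ⧸ N)) := sigmaCore_sigmaI
  set A : Subgroup G := (Subgroup.zpowers a).comap π with hA
  set E : Subgroup G := (sigmaCore σ i ((G ⧸ R) ⧸ N)).comap π with hE
  haveI hEnorm : E.Normal := hDnorm.comap π
  have hAE : A ≤ E := Subgroup.comap_mono (Subgroup.zpowers_le.mpr haD)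
  have hmapA : (Subgroup.zpowers a) = A.map π := by
    rw [hA, Subgroup.map_comap_eq, π.range_eq_top_of_surjective hπs, top_inf_eq]
  -- A is σ-subnormal in G
  have hAsub : IsSigmaSubnormal σ A := by
    refine ⟨2, ![A, E, ⊤], rfl, rfl, ?_⟩
    intro k
    fin_cases k
    · refine ⟨hAE, Or.inr ⟨i, isSigmaIGroup_of_orders (fun g => ?_)⟩⟩
      refine QuotientGroup.induction_on g (fun (e : ↥E) => ?_)
      intro p hp hd
      set m := orderOf (π (e : G)) with hm
      have hmσ : IsSigmaNumber σ i m := fun q hq hqd =>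
        hDcard q hq (hqd.trans (Subgroup.orderOf_dvd_natCard _ (Subgroup.mem_comap.mp e.2)))
      have hkerle : (π.ker.subgroupOf E) ≤ (A.subgroupOf E).normalCore := by
        haveI : (π.ker.subgroupOf E).Normal := Subgroup.normal_subgroupOf
        rw [Subgroup.normal_le_normalCore]
        intro y hy
        refine Subgroup.mem_subgroupOf.mpr (Subgroup.mem_comap.mpr ?_)
        have h1 : π (y : G) = 1 := Subgroup.mem_subgroupOf.mp hy
        rw [h1]
        exact Subgroup.one_mem _
      have hepow : (e : ↥E) ^ m ∈ (A.subgroupOf E).normalCore := by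
        refine hkerle (Subgroup.mem_subgroupOf.mpr ?_)
        show ((e ^ m : ↥E) : G) ∈ π.ker
        rw [MonoidHom.mem_ker, Subgroup.coe_pow, map_pow]
        exact pow_orderOf_eq_one _
      have horder : orderOf ((e : ↥E ⧸ (A.subgroupOf E).normalCore)) ∣ m := by
        rw [orderOf_dvd_iff_pow_eq_one]
        have h2 : ((e : ↥E ⧸ (A.subgroupOf E).normalCore)) ^ m =
            (((e : ↥E) ^ m : ↥E) : ↥E ⧸ (A.subgroupOf E).normalCore) :=
          (map_pow (QuotientGroup.mk' _) (e : ↥E) m).symm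
        rw [h2, QuotientGroup.eq_one_iff]
        exact hepow
      exact hmσ p hp (hd.trans horder)
    · exact ⟨le_top, Or.inl (Subgroup.Normal.subgroupOf hEnorm ⊤)⟩
  have hAperm : IsSigmaPermutable σ A := perm_of_subnormal hσ hPT hAsub
  -- elements of Hall σ j-subgroups with j ≠ i normalize A
  have hHallNorm : ∀ j, j ≠ i → ∀ L : Subgroup G, IsHallSigmaI σ j L →
      ∀ l ∈ L, ∀ w ∈ A, l * w * l⁻¹ ∈ A := by
    intro j hji L hL l hl w hw
    have h0 : (A : Set G) * (L : Set G) = (L : Set G) * (A : Set G) := hAperm j L hL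
    have hpermY : Permutes (Subgroup.zpowers a) (L.map π) := by
      show ((Subgroup.zpowers a : Subgroup ((G ⧸ R) ⧸ N)) : Set ((G ⧸ R) ⧸ N)) * (L.map π : Set ((G ⧸ R) ⧸ N))
        = (L.map π : Set ((G ⧸ R) ⧸ N)) * ((Subgroup.zpowers a : Subgroup ((G ⧸ R) ⧸ N)) : Set ((G ⧸ R) ⧸ N))
      rw [hmapA, Subgroup.coe_map, Subgroup.coe_map, ← Set.image_mul, ← Set.image_mul, h0]
    have hBord : ∀ p : ℕ, p.Prime → p ∣ Nat.card (L.map π) → p ∉ σ i := by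
      intro p hp hd hpi
      have hdL : p ∣ Nat.card L :=
        hd.trans (Subgroup.card_dvd_of_surjective (π.subgroupMap L) (π.subgroupMap_surjective L))
      exact block_disjoint hσ hji hp (hL.1 p hp hdL) hpi
    have hnorm := hall_normalizes hσ haD hBord hpermY (π l) (Subgroup.mem_map_of_mem π hl)
    refine Subgroup.mem_comap.mpr ?_
    rw [map_mul, map_mul, map_inv]
    obtain ⟨n0, hn0⟩ := Subgroup.mem_zpowers_iff.mp (Subgroup.mem_comap.mp hw)
    rw [← hn0]
    have hcz : π l * a ^ n0 * (π l)⁻¹ = (π l * a * (π l)⁻¹) ^ n0 := (conj_zpow).symm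
    rw [hcz]
    exact Subgroup.zpow_mem _ hnorm n0
  -- T : join of normal closures of Hall σ j-subgroups for j ≠ i
  set S : Set (Subgroup G) :=
    {K | ∃ j, j ≠ i ∧ ∃ L : Subgroup G, IsHallSigmaI σ j L ∧
      K = Subgroup.normalClosure (L : Set G)} with hS
  set T := sSup S with hT
  haveI hTnorm : T.Normal := normal_sSup (by
    rintro K ⟨j, hji, L, hL, rfl⟩
    exact Subgroup.normalClosure_normal)
  have hTidx : ∀ p : ℕ, p.Prime → p ∣ T.index → p ∈ σ i := by
    intro p hp hd
    have hpG : p ∣ Nat.card G := hd.trans (Subgroup.index_dvd_card T)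
    obtain ⟨j, hpj, _⟩ := hσ.existsUnique_mem p hp
    by_cases hji : j = i
    · exact hji ▸ hpj
    · exfalso
      obtain ⟨L, hL⟩ := hfull j ⟨p, hp, hpj, hpG⟩
      have hmem : Subgroup.normalClosure (L : Set G) ∈ S := ⟨j, hji, L, hL, rfl⟩
      have hle : L ≤ T :=
        le_trans (Subgroup.subset_normalClosure (s := (L : Set G))) (le_sSup hmem)
      exact hL.2 p hp (hd.trans (Subgroup.index_dvd_of_le hle)) hpj
  -- T normalizes A
  have hTnormalizer : T ≤ Subgroup.normalizer (A : Set G) := by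
    refine sSup_le ?_
    rintro K ⟨j, hji, L, hL, rfl⟩
    have hgen : Group.conjugatesOfSet (L : Set G) ⊆ (Subgroup.normalizer (A : Set G) : Set G) := by
      intro c hc
      obtain ⟨l, hl, hconj⟩ := Group.mem_conjugatesOfSet_iff.mp hc
      obtain ⟨u, hu⟩ := isConj_iff.mp hconj
      set L' := L.map (MulAut.conj u).toMonoidHom with hL'
      have hcL' : c ∈ L' := ⟨l, hl, by simp [MulAut.conj_apply, hu]⟩
      have hcardL' : Nat.card L' = Nat.card L :=
        Nat.card_congr (Subgroup.equivMapOfInjective L _ (MulAut.conj u).injective).symm.toEquiv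
      have hidxL' : L'.index = L.index := by
        have h1 := Subgroup.card_mul_index L'
        have h2 := Subgroup.card_mul_index L
        rw [hcardL'] at h1
        have hpos : 0 < Nat.card L := Nat.card_pos
        exact Nat.eq_of_mul_eq_mul_left hpos (h1.trans h2.symm)
      have hL'Hall : IsHallSigmaI σ j L' := by
        constructor
        · intro p hp hd
          rw [hcardL'] at hd
          exact hL.1 p hp hd
        · intro p hp hd
          rw [hidxL'] at hd
          exact hL.2 p hp hd
      rw [SetLike.mem_coe, Subgroup.mem_normalizer_iff]
      intro w
      constructor
      · intro hw
        exact hHallNorm j hji L' hL'Hall c hcL' w hw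
      · intro hw
        have h3 := hHallNorm j hji L' hL'Hall c⁻¹ (L'.inv_mem hcL') _ hw
        have h4 : c⁻¹ * (c * w * c⁻¹) * c⁻¹⁻¹ = w := by group
        rwa [h4] at h3
    exact (Subgroup.closure_le _).mpr hgen
  -- x lies in the image of T
  set M := T.map π₁ with hM
  haveI hMnorm : M.Normal := hTnorm.map π₁ hπ₁s
  have hxM : x ∈ M := by
    rw [← QuotientGroup.eq_one_iff]
    refine eq_one_of_order_both (σ := σ) (i := i) ?_ ?_
    · intro p hp hd
      have h1 : orderOf ((x : (G ⧸ R) ⧸ M)) ∣ Nat.card ((G ⧸ R) ⧸ M) := orderOf_dvd_natCard _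
      have h2 : Nat.card ((G ⧸ R) ⧸ M) = M.index := (Subgroup.index_eq_card M).symm
      have h3 : M.index ∣ T.index := by
        have hTM : T ≤ M.comap π₁ := Subgroup.le_comap_map (f := π₁) T
        calc M.index = (M.comap π₁).index := (Subgroup.index_comap_of_surjective M hπ₁s).symm
          _ ∣ T.index := Subgroup.index_dvd_of_le hTM
      exact hTidx p hp (((hd.trans h1).trans (h2 ▸ dvd_rfl)).trans h3)
    · intro p hp hd
      exact hx p hp (hd.trans (orderOf_map_dvd (QuotientGroup.mk' M) x))
  obtain ⟨t, htT, htx⟩ := Subgroup.mem_map.mp hxM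
  have htn : t ∈ Subgroup.normalizer (A : Set G) := hTnormalizer htT
  obtain ⟨w, hwA, hwa⟩ : ∃ w ∈ A, π w = a := by
    have : a ∈ A.map π := hmapA ▸ Subgroup.mem_zpowers a
    obtain ⟨w, hw, hweq⟩ := Subgroup.mem_map.mp this
    exact ⟨w, hw, hweq⟩
  have hconjA : t * w * t⁻¹ ∈ A := (Subgroup.mem_normalizer_iff.mp htn w).mp hwA
  have hfin : π (t * w * t⁻¹) ∈ Subgroup.zpowers a := Subgroup.mem_comap.mp hconjA
  rw [map_mul, map_mul, map_inv, hwa] at hfin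
  have hπt : π t = (QuotientGroup.mk' N) x := by
    show π₂ (π₁ t) = π₂ x
    rw [htx]
  rwa [hπt] at hfin
end

section
/- Let σ be a partition of the primes and G a finite σ-full group in which every σ-subnormal subgroup is σ-quasinormal (a QσT-group). Then G is a σ-SC-group: every chief factor of G below the σ-nilpotent residual G^{𝔑_σ} is simple. -/
open Subgroup
open scoped Pointwise

section Aux

open scoped commutatorElement

variable {G : Type*} [Group G]

/-- `L` is normalized by `H` (elementwise formulation). -/
private def NmlIn (H L : Subgroup G) : Prop := ∀ h ∈ H, ∀ x ∈ L, h * x * h⁻¹ ∈ L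

private lemma NmlIn.subgroupOf_normal {H L : Subgroup G} (h : NmlIn H L) :
    (L.subgroupOf H).Normal := by
  constructor
  intro n hn g
  rw [Subgroup.mem_subgroupOf] at hn ⊢
  push_cast
  exact h g g.2 n hn

private lemma sigmaSubnormal_of_nmlIn {ι : Type*} (σ : ι → Set ℕ) {H L : Subgroup G}
    (hH : H.Normal) (hLH : L ≤ H) (h : NmlIn H L) : IsSigmaSubnormal σ L := by
  refine ⟨2, ![L, H, ⊤], rfl, rfl, ?_⟩
  intro k
  fin_cases k
  · exact ⟨hLH, Or.inl h.subgroupOf_normal⟩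
  · refine ⟨le_top, Or.inl ?_⟩
    show (H.subgroupOf ⊤).Normal
    haveI := hH
    infer_instance

private lemma conj_in_sup {H L : Subgroup G} (hH : H.Normal) (hLH : L ≤ H)
    (hm : IsModularSubgroup L) (g : G) :
    ∀ x ∈ L, g * x * g⁻¹ ∈ L ⊔ (Subgroup.zpowers g ⊓ H) := by
  intro x hx
  rw [hm.2 (Subgroup.zpowers g) H hLH, Subgroup.mem_inf]
  have hgm : g ∈ L ⊔ Subgroup.zpowers g := Subgroup.mem_sup_right (Subgroup.mem_zpowers g)
  have hxm : x ∈ L ⊔ Subgroup.zpowers g := Subgroup.mem_sup_left hx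
  exact ⟨mul_mem (mul_mem hgm hxm) (inv_mem hgm), hH.conj_mem x (hLH hx) g⟩

private lemma conj_mem_of_le {H L : Subgroup G} (hH : H.Normal) (hLH : L ≤ H)
    (hm : IsModularSubgroup L) {g : G} (hg : Subgroup.zpowers g ⊓ H ≤ L) :
    ∀ x ∈ L, g * x * g⁻¹ ∈ L := by
  intro x hx
  have := conj_in_sup hH hLH hm g x hx
  rwa [sup_eq_left.mpr hg] at this


private def conjQuot (K H : Subgroup G) [K.Normal] [H.Normal] (g : G) :
    (↥H ⧸ K.subgroupOf H) →* (↥H ⧸ K.subgroupOf H) :=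
  QuotientGroup.map _ _ (MulAut.conjNormal g).toMonoidHom (by
    intro x hx
    rw [Subgroup.mem_subgroupOf] at hx
    rw [Subgroup.mem_comap, Subgroup.mem_subgroupOf]
    show ((MulAut.conjNormal g x : ↥H) : G) ∈ K
    rw [MulAut.conjNormal_apply]
    exact ‹K.Normal›.conj_mem _ hx g)

private lemma conjQuot_mk (K H : Subgroup G) [K.Normal] [H.Normal] (g : G) (x : ↥H) :
    conjQuot K H g (QuotientGroup.mk x) = QuotientGroup.mk (MulAut.conjNormal g x) :=
  QuotientGroup.map_mk _ _ _ _ _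

private lemma exists_prime_exponent [Finite G] (K H : Subgroup G)
    (hKn : K.Normal) (hHn : H.Normal) (hKH : K < H)
    (hchief : ∀ N : Subgroup G, N.Normal → K ≤ N → N ≤ H → N = K ∨ N = H)
    (habel : ∀ a ∈ H, ∀ b ∈ H, ⁅a, b⁆ ∈ K) :
    ∃ p : ℕ, p.Prime ∧ ∀ h ∈ H, h ^ p ∈ K := by
  haveI := hKn
  haveI := hHn
  set Q := (↥H ⧸ K.subgroupOf H)
  obtain ⟨y, hyH, hyK⟩ := SetLike.exists_of_lt hKH
  have hmkne : (QuotientGroup.mk (⟨y, hyH⟩ : ↥H) : Q) ≠ 1 := by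
    rw [Ne, QuotientGroup.eq_one_iff, Subgroup.mem_subgroupOf]
    exact hyK
  haveI : Nontrivial Q := ⟨_, _, hmkne⟩
  obtain ⟨p, hp, hpdvd⟩ := Nat.exists_prime_and_dvd (Finite.one_lt_card (α := Q)).ne'
  haveI : Fact p.Prime := ⟨hp⟩
  -- commutativity of Q
  have hQcomm : ∀ u v : Q, u * v = v * u := by
    intro u v
    induction u using QuotientGroup.induction_on with | H a =>
    induction v using QuotientGroup.induction_on with | H b =>
    show (QuotientGroup.mk (a * b) : Q) = QuotientGroup.mk (b * a)
    rw [QuotientGroup.eq]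
    rw [Subgroup.mem_subgroupOf]
    have : ((a * b)⁻¹ * (b * a) : ↥H) = ⁅b⁻¹, a⁻¹⁆ := by
      simp [commutatorElement_def, mul_assoc]
    rw [this]
    show (((⁅b⁻¹, a⁻¹⁆ : ↥H)) : G) ∈ K
    have : ((⁅(b⁻¹ : ↥H), (a⁻¹ : ↥H)⁆ : ↥H) : G) = ⁅((b : ↥H) : G)⁻¹, ((a : ↥H) : G)⁻¹⁆ := by
      simp [commutatorElement_def]
    rw [this]
    exact habel _ (inv_mem b.2) _ (inv_mem a.2)
  -- Cauchy
  obtain ⟨q, hq⟩ := exists_prime_orderOf_dvd_card' (G := Q) p hpdvd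
  obtain ⟨z, rfl⟩ := QuotientGroup.mk_surjective q
  have hz1 : (z : G) ∉ K := by
    intro hzK
    have : (QuotientGroup.mk z : Q) = 1 := by
      rw [QuotientGroup.eq_one_iff, Subgroup.mem_subgroupOf]; exact hzK
    rw [this] at hq
    simp at hq
    exact hp.ne_one hq.symm
  have hzp : (z : G) ^ p ∈ K := by
    have : (QuotientGroup.mk (z ^ p) : Q) = 1 := by
      rw [QuotientGroup.mk_pow, ← hq]
      exact pow_orderOf_eq_one _
    rw [QuotientGroup.eq_one_iff, Subgroup.mem_subgroupOf] at this
    exact_mod_cast this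
  -- the subgroup Ω
  set Om : Subgroup G :=
    { carrier := {w | w ∈ H ∧ w ^ p ∈ K}
      one_mem' := ⟨one_mem H, by simpa using one_mem K⟩
      mul_mem' := by
        rintro a b ⟨haH, haK⟩ ⟨hbH, hbK⟩
        refine ⟨mul_mem haH hbH, ?_⟩
        have key : (QuotientGroup.mk ((⟨a, haH⟩ : ↥H) * ⟨b, hbH⟩) : Q) ^ p = 1 := by
          have h1 : (QuotientGroup.mk ((⟨a, haH⟩ : ↥H)) : Q) ^ p = 1 := by
            rw [← QuotientGroup.mk_pow, QuotientGroup.eq_one_iff, Subgroup.mem_subgroupOf]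
            exact_mod_cast haK
          have h2 : (QuotientGroup.mk ((⟨b, hbH⟩ : ↥H)) : Q) ^ p = 1 := by
            rw [← QuotientGroup.mk_pow, QuotientGroup.eq_one_iff, Subgroup.mem_subgroupOf]
            exact_mod_cast hbK
          have : (QuotientGroup.mk ((⟨a, haH⟩ : ↥H) * ⟨b, hbH⟩) : Q)
              = (QuotientGroup.mk ((⟨a, haH⟩ : ↥H)) : Q) * QuotientGroup.mk ((⟨b, hbH⟩ : ↥H)) := rfl
          rw [this, Commute.mul_pow (hQcomm _ _), h1, h2, one_mul]
        rw [← QuotientGroup.mk_pow, QuotientGroup.eq_one_iff, Subgroup.mem_subgroupOf] at key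
        exact_mod_cast key
      inv_mem' := by
        rintro a ⟨haH, haK⟩
        exact ⟨inv_mem haH, by rw [inv_pow]; exact inv_mem haK⟩ } with hOm
  have hOmNormal : Om.Normal := by
    constructor
    rintro w ⟨hwH, hwK⟩ g
    refine ⟨hHn.conj_mem w hwH g, ?_⟩
    have : (g * w * g⁻¹) ^ p = g * w ^ p * g⁻¹ := by
      rw [conj_pow]
    rw [this]
    exact hKn.conj_mem _ hwK g
  have hKOm : K ≤ Om := fun k hk => ⟨hKH.le hk, pow_mem hk p⟩
  have hOmH : Om ≤ H := fun w hw => hw.1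
  have hOmK : Om ≠ K := by
    intro hEq
    have : (z : G) ∈ Om := ⟨z.2, hzp⟩
    rw [hEq] at this
    exact hz1 this
  rcases hchief Om hOmNormal hKOm hOmH with h | h
  · exact absurd h hOmK
  · exact ⟨p, hp, fun x hx => (h ▸ hx : x ∈ Om).2⟩


private lemma opClosure_normal (p : ℕ) :
    (Subgroup.closure {g : G | ¬ p ∣ orderOf g}).Normal := by
  set S : Set G := {g : G | ¬ p ∣ orderOf g}
  constructor
  intro n hn g
  have himg : (MulAut.conj g).toMonoidHom '' S = S := by
    apply Set.eq_of_subset_of_subset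
    · rintro _ ⟨x, hx, rfl⟩
      show ¬ p ∣ orderOf ((MulAut.conj g).toMonoidHom x)
      rwa [orderOf_injective _ (MulAut.conj g).injective]
    · intro x hx
      refine ⟨g⁻¹ * x * g, ?_, by simp [MulAut.conj_apply]; group⟩
      show ¬ p ∣ orderOf (g⁻¹ * x * g)
      have : g⁻¹ * x * g = (MulAut.conj g⁻¹).toMonoidHom x := by
        simp [MulAut.conj_apply]
      rw [this, orderOf_injective _ (MulAut.conj g⁻¹).injective]
      exact hx
  have : g * n * g⁻¹ ∈ (Subgroup.closure S).map (MulAut.conj g).toMonoidHom :=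
    Subgroup.mem_map.mpr ⟨n, hn, by simp [MulAut.conj_apply]⟩
  rwa [MonoidHom.map_closure, himg] at this

private lemma opClosure_sup_sylow_eq_top [Finite G] (p : ℕ) [Fact p.Prime] (P : Sylow p G) :
    Subgroup.closure {g : G | ¬ p ∣ orderOf g} ⊔ (P : Subgroup G) = ⊤ := by
  set Op := Subgroup.closure {g : G | ¬ p ∣ orderOf g}
  haveI : Op.Normal := opClosure_normal p
  have hpg : IsPGroup p (G ⧸ Op) := by
    intro q
    induction q using QuotientGroup.induction_on with | H g =>
    refine ⟨(orderOf g).factorization p, ?_⟩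
    rw [← QuotientGroup.mk_pow, QuotientGroup.eq_one_iff]
    apply Subgroup.subset_closure
    show ¬ p ∣ orderOf (g ^ p ^ (orderOf g).factorization p)
    rw [orderOf_pow]
    have hord : orderOf g ≠ 0 := (orderOf_pos g).ne'
    have hdvd : p ^ (orderOf g).factorization p ∣ orderOf g := Nat.ordProj_dvd _ p
    rw [Nat.gcd_eq_right hdvd]
    exact Nat.not_dvd_ordCompl Fact.out hord
  obtain ⟨m, hm⟩ := IsPGroup.iff_card.mp hpg
  have hOpindex : Op.index = p ^ m := by rw [Subgroup.index_eq_card]; exact hm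
  have h1 : (Op ⊔ (P : Subgroup G)).index ∣ p ^ m :=
    hOpindex ▸ Subgroup.index_dvd_of_le le_sup_left
  have h2 : (Op ⊔ (P : Subgroup G)).index ∣ (P : Subgroup G).index :=
    Subgroup.index_dvd_of_le le_sup_right
  have h3 : ¬ p ∣ (P : Subgroup G).index :=
    P.not_dvd_index' Subgroup.index_ne_zero_of_finite
  obtain ⟨j, hj, hjeq⟩ := (Nat.dvd_prime_pow Fact.out).mp h1
  rcases Nat.eq_zero_or_pos j with rfl | hjpos
  · rw [pow_zero] at hjeq
    exact Subgroup.index_eq_one.mp hjeq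
  · exfalso
    apply h3
    exact dvd_trans (hjeq ▸ dvd_pow_self p hjpos.ne') h2

private lemma zpowers_inf_le_of_not_dvd [Finite G] {K H : Subgroup G} {p : ℕ} (hp : p.Prime)
    (hexp : ∀ h ∈ H, h ^ p ∈ K) {g : G} (hg : ¬ p ∣ orderOf g) :
    Subgroup.zpowers g ⊓ H ≤ K := by
  rintro u ⟨hu1, hu2⟩
  have hdvd : orderOf u ∣ orderOf g := by
    have := Subgroup.orderOf_dvd_natCard (Subgroup.zpowers g) hu1
    rwa [Nat.card_zpowers] at this
  have hnd : ¬ p ∣ orderOf u := fun h => hg (h.trans hdvd)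
  have hcop : Nat.Coprime p (orderOf u) := (hp.coprime_iff_not_dvd).mpr hnd
  obtain ⟨a, b, hab⟩ := (Nat.isCoprime_iff_coprime.mpr hcop)
  have hupK : u ^ p ∈ K := hexp u hu2
  have hu : u = (u ^ p) ^ a * (u ^ orderOf u) ^ b := by
    rw [← zpow_natCast u p, ← zpow_natCast u (orderOf u), ← zpow_mul, ← zpow_mul,
      ← zpow_add, mul_comm (p : ℤ) a, mul_comm ((orderOf u : ℤ)) b, hab, zpow_one]
  rw [hu]
  exact mul_mem (Subgroup.zpow_mem K hupK a)
    (by rw [pow_orderOf_eq_one]; simpa using one_mem K)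

private lemma exists_sylow_fixed [Finite G] (K H : Subgroup G)
    (hKn : K.Normal) (hHn : H.Normal) (hKH : K < H) (p : ℕ) [Fact p.Prime]
    (P : Sylow p G) (hexp : ∀ h ∈ H, h ^ p ∈ K) :
    ∃ w, w ∈ H ∧ w ∉ K ∧ ∀ x ∈ (P : Subgroup G), x * w * x⁻¹ * w⁻¹ ∈ K := by
  haveI := hKn
  haveI := hHn
  set Q := (↥H ⧸ K.subgroupOf H)
  -- Q is a p-group
  have hpgQ : IsPGroup p Q := by
    intro q
    induction q using QuotientGroup.induction_on with | H a =>
    refine ⟨1, ?_⟩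
    rw [pow_one, ← QuotientGroup.mk_pow, QuotientGroup.eq_one_iff, Subgroup.mem_subgroupOf]
    exact_mod_cast hexp (a : G) a.2
  obtain ⟨y, hyH, hyK⟩ := SetLike.exists_of_lt hKH
  have hmkne : (QuotientGroup.mk (⟨y, hyH⟩ : ↥H) : Q) ≠ 1 := by
    rw [Ne, QuotientGroup.eq_one_iff, Subgroup.mem_subgroupOf]
    exact hyK
  haveI : Nontrivial Q := ⟨_, _, hmkne⟩
  have hpdvd : p ∣ Nat.card Q := by
    obtain ⟨n, hnpos, hn⟩ := (hpgQ.nontrivial_iff_card).mp inferInstance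
    exact hn ▸ dvd_pow_self p hnpos.ne'
  -- action of P on Q
  letI : MulAction ↥(P : Subgroup G) Q :=
    { smul := fun x q => conjQuot K H (x : G) q
      one_smul := fun q => by
        induction q using QuotientGroup.induction_on with | H a =>
        show conjQuot K H ((1 : ↥(P : Subgroup G)) : G) (QuotientGroup.mk a) = _
        rw [conjQuot_mk]
        congr 1
        show MulAut.conjNormal ((1 : ↥(P : Subgroup G)) : G) a = a
        simp
      mul_smul := fun x z q => by
        induction q using QuotientGroup.induction_on with | H a =>
        show conjQuot K H ((x * z : ↥(P : Subgroup G)) : G) (QuotientGroup.mk a)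
          = conjQuot K H (x : G) (conjQuot K H (z : G) (QuotientGroup.mk a))
        rw [conjQuot_mk, conjQuot_mk, conjQuot_mk]
        congr 1
        push_cast
        rw [map_mul]
        rfl }
  have hfix1 : (1 : Q) ∈ MulAction.fixedPoints ↥(P : Subgroup G) Q := by
    intro x
    show conjQuot K H (x : G) 1 = 1
    exact map_one _
  obtain ⟨v, hvfix, hvne⟩ :=
    (P.isPGroup').exists_fixed_point_of_prime_dvd_card_of_fixed_point (α := Q) hpdvd hfix1
  obtain ⟨w, rfl⟩ := QuotientGroup.mk_surjective v
  refine ⟨(w : G), w.2, ?_, ?_⟩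
  · intro hwK
    apply hvne
    rw [eq_comm, QuotientGroup.eq_one_iff, Subgroup.mem_subgroupOf]
    exact hwK
  · intro x hx
    have := hvfix ⟨x, hx⟩
    rw [show (⟨x, hx⟩ : ↥(P : Subgroup G)) • (QuotientGroup.mk w : Q)
        = conjQuot K H x (QuotientGroup.mk w) from rfl, conjQuot_mk] at this
    rw [QuotientGroup.eq] at this
    rw [Subgroup.mem_subgroupOf] at this
    have hcoe : (((MulAut.conjNormal x w)⁻¹ * w : ↥H) : G)
        = (x * (w : G) * x⁻¹)⁻¹ * (w : G) := by
      push_cast [MulAut.conjNormal_apply]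
      rfl
    rw [hcoe] at this
    have h2 := hKn.conj_mem _ this (x * (w : G) * x⁻¹)
    have heq : (x * (w : G) * x⁻¹) * ((x * (w : G) * x⁻¹)⁻¹ * (w : G)) * (x * (w : G) * x⁻¹)⁻¹
        = (w : G) * x * (w : G)⁻¹ * x⁻¹ := by group
    rw [heq] at h2
    have h3 := inv_mem h2
    have heq2 : ((w : G) * x * (w : G)⁻¹ * x⁻¹)⁻¹ = x * (w : G) * x⁻¹ * (w : G)⁻¹ := by group
    rwa [heq2] at h3

private lemma chief_forcing [Finite G] (K H : Subgroup G)
    (hKn : K.Normal) (hHn : H.Normal) (hKH : K < H)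
    (hchief : ∀ N : Subgroup G, N.Normal → K ≤ N → N ≤ H → N = K ∨ N = H)
    (hmod : ∀ L : Subgroup G, K ≤ L → L ≤ H → NmlIn H L → IsModularSubgroup L) :
    ∀ L : Subgroup G, K ≤ L → L ≤ H → NmlIn H L → L = K ∨ L = H := by
  intro L hKL hLH hNml
  by_contra hcon
  push_neg at hcon
  obtain ⟨hLK, hLHne⟩ := hcon
  have hKLlt : K < L := lt_of_le_of_ne hKL (Ne.symm hLK)
  classical
  -- Step A : H/K is abelian
  have habel : ∀ a ∈ H, ∀ b ∈ H, ⁅a, b⁆ ∈ K := by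
    set S : Set (Subgroup G) := {L' | K < L' ∧ L' ≤ H ∧ NmlIn H L' ∧ L' ≠ H} with hS
    have hSfin : S.Finite := Set.toFinite _
    have hSne : S.Nonempty := ⟨L, hKLlt, hLH, hNml, hLHne⟩
    obtain ⟨Lm, hLmS, hLmmax⟩ := Set.Finite.exists_maximalFor id S hSfin hSne
    obtain ⟨hKLm, hLmH, hNmlLm, hLmne⟩ := hLmS
    have hmodLm : IsModularSubgroup Lm := hmod Lm hKLm.le hLmH hNmlLm
    by_cases hnormal : ∀ g : G, ∀ x ∈ Lm, g * x * g⁻¹ ∈ Lm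
    · exfalso
      have hLmN : Lm.Normal := ⟨fun x hx g => hnormal g x hx⟩
      rcases hchief Lm hLmN hKLm.le hLmH with h | h
      · exact hKLm.ne' h
      · exact hLmne h
    · push_neg at hnormal
      obtain ⟨g, x0, hx0Lm, hx0out⟩ := hnormal
      set φg := (MulAut.conj g).toMonoidHom with hφg
      set Lg := Lm.map φg with hLg
      have hLgH : Lg ≤ H := by
        rintro _ ⟨x, hx, rfl⟩
        exact hHn.conj_mem x (hLmH hx) g
      set J := Lm ⊔ Lg with hJ
      have hJH : J ≤ H := sup_le hLmH hLgH
      have hNmlJ : NmlIn H J := by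
        intro h hh x hxJ
        set ψ := (MulAut.conj h).toMonoidHom with hψ
        have h1 : Subgroup.map ψ Lm ≤ J := by
          rintro _ ⟨y, hy, rfl⟩
          exact Subgroup.mem_sup_left (hNmlLm h hh y hy)
        have h2 : Subgroup.map ψ Lg ≤ J := by
          rintro _ ⟨_, ⟨y, hy, rfl⟩, rfl⟩
          have hinH : g⁻¹ * h * g ∈ H := by
            have := hHn.conj_mem h hh g⁻¹
            simpa using this
          have hz : (g⁻¹ * h * g) * y * (g⁻¹ * h * g)⁻¹ ∈ Lm :=
            hNmlLm _ hinH y hy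
          have : ψ (φg y) = φg ((g⁻¹ * h * g) * y * (g⁻¹ * h * g)⁻¹) := by
            simp only [hψ, hφg, MulEquiv.coe_toMonoidHom, MulAut.conj_apply]
            group
          rw [this]
          exact Subgroup.mem_sup_right (Subgroup.mem_map.mpr ⟨_, hz, rfl⟩)
        have : ψ x ∈ Subgroup.map ψ J := Subgroup.mem_map.mpr ⟨x, hxJ, rfl⟩
        rw [hJ, Subgroup.map_sup] at this
        have hle : Subgroup.map ψ Lm ⊔ Subgroup.map ψ Lg ≤ J := sup_le h1 h2
        have := hle this
        simpa [hψ, MulAut.conj_apply] using this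
      have hJne : Lm ≠ J := by
        intro hEq
        apply hx0out
        rw [hEq]
        exact Subgroup.mem_sup_right (Subgroup.mem_map.mpr ⟨x0, hx0Lm, rfl⟩)
      have hJeqH : J = H := by
        by_contra hJneH
        exact hJne (le_antisymm le_sup_left (hLmmax ⟨lt_of_lt_of_le hKLm le_sup_left, hJH, hNmlJ, hJneH⟩ le_sup_left))
      set Cg := Subgroup.zpowers g ⊓ H with hCg
      have hHLC : H = Lm ⊔ Cg := by
        apply le_antisymm
        · rw [← hJeqH, hJ]
          apply sup_le le_sup_left
          rintro _ ⟨y, hy, rfl⟩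
          exact conj_in_sup hHn hLmH hmodLm g y hy
        · exact sup_le hLmH inf_le_right
      -- decomposition subgroup
      set T : Subgroup G :=
        { carrier := {z | ∃ l ∈ Lm, ∃ c ∈ Cg, z = l * c}
          one_mem' := ⟨1, one_mem _, 1, one_mem _, by simp⟩
          mul_mem' := by
            rintro a b ⟨l1, hl1, c1, hc1, rfl⟩ ⟨l2, hl2, c2, hc2, rfl⟩
            refine ⟨l1 * (c1 * l2 * c1⁻¹), ?_, c1 * c2, mul_mem hc1 hc2, by group⟩
            exact mul_mem hl1 (hNmlLm c1 (hCg ▸ hc1).2 l2 hl2)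
          inv_mem' := by
            rintro a ⟨l, hl, c, hc, rfl⟩
            refine ⟨c⁻¹ * l⁻¹ * c⁻¹⁻¹, ?_, c⁻¹, inv_mem hc, by group⟩
            exact hNmlLm c⁻¹ (inv_mem (hCg ▸ hc).2) l⁻¹ (inv_mem hl) } with hT
      have hdecomp : ∀ h ∈ H, ∃ l ∈ Lm, ∃ c ∈ Cg, h = l * c := by
        intro h hh
        have : H ≤ T := by
          rw [hHLC]
          apply sup_le
          · intro l hl; exact ⟨l, hl, 1, one_mem _, by simp⟩
          · intro c hc; exact ⟨1, one_mem _, c, hc, by simp⟩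
        exact this hh
      -- commutators of H lie in Lm
      have habel' : ∀ a ∈ H, ∀ b ∈ H, ⁅a, b⁆ ∈ Lm := by
        intro a ha b hb
        haveI : (Lm.subgroupOf H).Normal := NmlIn.subgroupOf_normal hNmlLm
        obtain ⟨l1, hl1, c1, hc1, hab1⟩ := hdecomp a ha
        obtain ⟨l2, hl2, c2, hc2, hab2⟩ := hdecomp b hb
        set π := QuotientGroup.mk' (Lm.subgroupOf H) with hπ
        have hc1H : c1 ∈ H := (hCg ▸ hc1).2
        have hc2H : c2 ∈ H := (hCg ▸ hc2).2
        have hl1H : l1 ∈ H := hLmH hl1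
        have hl2H : l2 ∈ H := hLmH hl2
        have key : ∀ (x : G) (hx : x ∈ H) (l c : G) (hl : l ∈ Lm) (hcH : c ∈ H)
            (hx' : x = l * c), π ⟨x, hx⟩ = π ⟨c, hcH⟩ := by
          intro x hx l c hl hcH hx'
          have hlH : l ∈ H := hLmH hl
          have : (⟨x, hx⟩ : ↥H) = ⟨l, hlH⟩ * ⟨c, hcH⟩ := by
            apply Subtype.ext
            exact hx'
          rw [this, map_mul]
          have : π ⟨l, hlH⟩ = 1 := by
            show (QuotientGroup.mk (⟨l, hlH⟩ : ↥H) : ↥H ⧸ Lm.subgroupOf H) = 1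
            rw [QuotientGroup.eq_one_iff, Subgroup.mem_subgroupOf]
            exact hl
          rw [this, one_mul]
        have hπa : π ⟨a, ha⟩ = π ⟨c1, hc1H⟩ := key a ha l1 c1 hl1 hc1H hab1
        have hπb : π ⟨b, hb⟩ = π ⟨c2, hc2H⟩ := key b hb l2 c2 hl2 hc2H hab2
        have hcomm : Commute c1 c2 := by
          obtain ⟨m, hm⟩ := Subgroup.mem_zpowers_iff.mp (hCg ▸ hc1).1
          obtain ⟨n, hn⟩ := Subgroup.mem_zpowers_iff.mp (hCg ▸ hc2).1
          rw [← hm, ← hn]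
          exact Commute.zpow_zpow (Commute.refl g) m n
        have hcomm' : Commute (⟨c1, hc1H⟩ : ↥H) ⟨c2, hc2H⟩ := by
          apply Subtype.ext
          exact hcomm
        have hπcomm : π ⁅(⟨a, ha⟩ : ↥H), (⟨b, hb⟩ : ↥H)⁆ = 1 := by
          rw [map_commutatorElement, hπa, hπb, ← map_commutatorElement,
            commutatorElement_eq_one_iff_commute.mpr hcomm', map_one]
        have : ⁅(⟨a, ha⟩ : ↥H), (⟨b, hb⟩ : ↥H)⁆ ∈ Lm.subgroupOf H := by
          rwa [← QuotientGroup.eq_one_iff (N := Lm.subgroupOf H)]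
        rw [Subgroup.mem_subgroupOf] at this
        have hcoe : ((⁅(⟨a, ha⟩ : ↥H), (⟨b, hb⟩ : ↥H)⁆ : ↥H) : G) = ⁅a, b⁆ := by
          simp [commutatorElement_def]
        rwa [hcoe] at this
      have hcommle : ⁅H, H⁆ ≤ Lm := Subgroup.commutator_le.mpr habel'
      haveI := hKn
      haveI := hHn
      have hDn : (K ⊔ ⁅H, H⁆).Normal := inferInstance
      rcases hchief (K ⊔ ⁅H, H⁆) hDn le_sup_left
          (sup_le hKH.le (hcommle.trans hLmH)) with h | h
      · intro a ha b hb
        have : ⁅a, b⁆ ∈ K ⊔ ⁅H, H⁆ :=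
          Subgroup.mem_sup_right (Subgroup.commutator_mem_commutator ha hb)
        rwa [h] at this
      · exfalso
        apply hLmne
        apply le_antisymm hLmH
        rw [← h]
        exact sup_le hKLm.le hcommle
  -- Step C : exponent p
  obtain ⟨p, hp, hexp⟩ := exists_prime_exponent K H hKn hHn hKH hchief habel
  haveI : Fact p.Prime := ⟨hp⟩
  obtain ⟨P⟩ : Nonempty (Sylow p G) := inferInstance
  have hp' : ∀ g : G, ¬ p ∣ orderOf g → Subgroup.zpowers g ⊓ H ≤ K :=
    fun g hg => zpowers_inf_le_of_not_dvd hp hexp hg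
  -- normality criterion
  have hNormalOf : ∀ M : Subgroup G, (∀ x ∈ (P : Subgroup G), ∀ l ∈ M, x * l * x⁻¹ ∈ M) →
      (∀ g : G, ¬ p ∣ orderOf g → ∀ l ∈ M, g * l * g⁻¹ ∈ M) → M.Normal := by
    intro M hPn hSn
    rw [← Subgroup.normalizer_eq_top_iff, eq_top_iff, ← opClosure_sup_sylow_eq_top p P]
    apply sup_le
    · rw [Subgroup.closure_le]
      intro g hg
      rw [SetLike.mem_coe, Subgroup.mem_normalizer_iff]
      intro h
      constructor
      · exact fun hh => hSn g hg h hh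
      · intro hh
        have h2 := hSn g⁻¹ (by rwa [orderOf_inv]) _ hh
        have heq : g⁻¹ * (g * h * g⁻¹) * g⁻¹⁻¹ = h := by group
        rwa [heq] at h2
    · intro x hx
      rw [Subgroup.mem_normalizer_iff]
      intro h
      constructor
      · exact fun hh => hPn x hx h hh
      · intro hh
        have h2 := hPn x⁻¹ (inv_mem hx) _ hh
        have heq : x⁻¹ * (x * h * x⁻¹) * x⁻¹⁻¹ = h := by group
        rwa [heq] at h2
  -- fixed point of the Sylow subgroup
  obtain ⟨w0, hw0H, hw0K, hw0fix⟩ := exists_sylow_fixed K H hKn hHn hKH p P hexp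
  -- the subgroup of P-central elements mod K
  set W : Subgroup G :=
    { carrier := {z | z ∈ H ∧ ∀ x ∈ (P : Subgroup G), x * z * x⁻¹ * z⁻¹ ∈ K}
      one_mem' := ⟨one_mem H, fun x _ => by simpa using one_mem K⟩
      mul_mem' := by
        rintro a b ⟨haH, haC⟩ ⟨hbH, hbC⟩
        refine ⟨mul_mem haH hbH, ?_⟩
        intro x hx
        have h1 := haC x hx
        have h2 := hbC x hx
        have h3 := hKn.conj_mem _ h2 a
        have heq : x * (a * b) * x⁻¹ * (a * b)⁻¹
            = (x * a * x⁻¹ * a⁻¹) * (a * (x * b * x⁻¹ * b⁻¹) * a⁻¹) := by group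
        rw [heq]
        exact mul_mem h1 h3
      inv_mem' := by
        rintro a ⟨haH, haC⟩
        refine ⟨inv_mem haH, ?_⟩
        intro x hx
        have h1 := inv_mem (haC x hx)
        have h2 := hKn.conj_mem _ h1 a⁻¹
        have heq : a⁻¹ * (x * a * x⁻¹ * a⁻¹)⁻¹ * a⁻¹⁻¹ = x * a⁻¹ * x⁻¹ * a⁻¹⁻¹ := by group
        rwa [heq] at h2 } with hW
  have hKW : K ≤ W := by
    intro k hk
    refine ⟨hKH.le hk, ?_⟩
    intro x hx
    exact mul_mem (hKn.conj_mem k hk x) (inv_mem hk)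
  have hWH : W ≤ H := fun z hz => hz.1
  have hNmlW : NmlIn H W := by
    intro h hh w hwW
    have hcK : ⁅h, w⁆ ∈ K := habel h hh w (hWH hwW)
    have heq : h * w * h⁻¹ = ⁅h, w⁆ * w := by
      rw [commutatorElement_def]; group
    rw [heq]
    exact mul_mem (hKW hcK) hwW
  have hWP : ∀ x' ∈ (P : Subgroup G), ∀ w ∈ W, x' * w * x'⁻¹ ∈ W := by
    rintro x' hx' w ⟨hwH, hwC⟩
    refine ⟨hHn.conj_mem w hwH x', ?_⟩
    intro x hx
    have hy : x'⁻¹ * x * x' ∈ (P : Subgroup G) := mul_mem (mul_mem (inv_mem hx') hx) hx'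
    have h0 := hwC _ hy
    have h1 := hKn.conj_mem _ h0 x'
    have heq : x' * ((x'⁻¹ * x * x') * w * (x'⁻¹ * x * x')⁻¹ * w⁻¹) * x'⁻¹
        = x * (x' * w * x'⁻¹) * x⁻¹ * (x' * w * x'⁻¹)⁻¹ := by group
    rwa [heq] at h1
  have hWS : ∀ g : G, ¬ p ∣ orderOf g → ∀ w ∈ W, g * w * g⁻¹ ∈ W :=
    fun g hg => conj_mem_of_le hHn hWH (hmod W hKW hWH hNmlW) ((hp' g hg).trans hKW)
  have hWNormal : W.Normal := hNormalOf W hWP hWS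
  have hWneK : W ≠ K := by
    intro hEq
    apply hw0K
    have : w0 ∈ W := ⟨hw0H, fun x hx => hw0fix x hx⟩
    rwa [hEq] at this
  have hcentral : ∀ h ∈ H, ∀ x ∈ (P : Subgroup G), x * h * x⁻¹ * h⁻¹ ∈ K := by
    rcases hchief W hWNormal hKW hWH with h | h
    · exact absurd h hWneK
    · intro a ha x hx
      have : a ∈ W := by rw [h]; exact ha
      exact this.2 x hx
  -- Step E : L itself is normal, contradiction
  have hLP : ∀ x ∈ (P : Subgroup G), ∀ l ∈ L, x * l * x⁻¹ ∈ L := by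
    intro x hx l hl
    have hc := hcentral l (hLH hl) x hx
    have heq : x * l * x⁻¹ = (x * l * x⁻¹ * l⁻¹) * l := by group
    rw [heq]
    exact mul_mem (hKL hc) hl
  have hLS : ∀ g : G, ¬ p ∣ orderOf g → ∀ l ∈ L, g * l * g⁻¹ ∈ L :=
    fun g hg => conj_mem_of_le hHn hLH (hmod L hKL hLH hNml) ((hp' g hg).trans hKL)
  have hLN : L.Normal := hNormalOf L hLP hLS
  rcases hchief L hLN hKL hLH with h | h
  · exact hLK h
  · exact hLHne h

end Aux

/-- A σ-full finite group in which every σ-subnormal subgroup is σ-quasinormal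
(a QσT-group) is a σ-SC-group. -/
theorem statement_19 {ι : Type*} (σ : ι → Set ℕ) (hσ : IsPrimePartition σ)
    (G : Type*) [Group G] [Finite G]
    (hfull : IsSigmaFull σ G)
    (hQT : ∀ A : Subgroup G, IsSigmaSubnormal σ A → IsSigmaQuasinormal σ A) :
    IsSigmaSCGroup σ G := by
  intro K H hc _hres
  obtain ⟨hKn, hHn, hKH, hchief⟩ := hc
  haveI := hKn
  haveI := hHn
  have hmod : ∀ L : Subgroup G, K ≤ L → L ≤ H → NmlIn H L → IsModularSubgroup L :=
    fun L _ hLH hNml => (hQT L (sigmaSubnormal_of_nmlIn σ hHn hLH hNml)).1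
  have main := chief_forcing K H hKn hHn hKH hchief hmod
  obtain ⟨y, hyH, hyK⟩ := SetLike.exists_of_lt hKH
  refine { toNontrivial := ?_, eq_bot_or_eq_top_of_normal := ?_ }
  · refine ⟨QuotientGroup.mk (⟨y, hyH⟩ : ↥H), 1, ?_⟩
    rw [Ne, QuotientGroup.eq_one_iff, Subgroup.mem_subgroupOf]
    exact hyK
  · intro N hN
    set L1 := N.comap (QuotientGroup.mk' (K.subgroupOf H)) with hL1
    haveI : L1.Normal := Subgroup.Normal.comap hN _
    set L := L1.map H.subtype with hL
    have hKL : K ≤ L := by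
      intro k hk
      refine Subgroup.mem_map.mpr ⟨⟨k, hKH.le hk⟩, ?_, rfl⟩
      rw [hL1, Subgroup.mem_comap]
      have : (QuotientGroup.mk' (K.subgroupOf H)) (⟨k, hKH.le hk⟩ : ↥H) = 1 := by
        rw [QuotientGroup.mk'_apply, QuotientGroup.eq_one_iff, Subgroup.mem_subgroupOf]
        exact hk
      rw [this]
      exact one_mem N
    have hLH : L ≤ H := Subgroup.map_subtype_le L1
    have hNml : NmlIn H L := by
      rintro h hh x hx
      obtain ⟨x', hx', rfl⟩ := Subgroup.mem_map.mp hx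
      refine Subgroup.mem_map.mpr ⟨⟨h, hh⟩ * x' * ⟨h, hh⟩⁻¹, ?_, rfl⟩
      exact ‹L1.Normal›.conj_mem x' hx' ⟨h, hh⟩
    rcases main L hKL hLH hNml with h | h
    · left
      rw [eq_bot_iff]
      intro q hq
      obtain ⟨z, rfl⟩ := QuotientGroup.mk'_surjective (K.subgroupOf H) q
      have hz : z ∈ L1 := by
        rw [hL1, Subgroup.mem_comap]
        exact hq
      have : (z : G) ∈ L := Subgroup.mem_map.mpr ⟨z, hz, rfl⟩
      rw [h] at this
      rw [Subgroup.mem_bot]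
      rw [QuotientGroup.mk'_apply, QuotientGroup.eq_one_iff, Subgroup.mem_subgroupOf]
      exact this
    · right
      rw [eq_top_iff]
      intro q _
      obtain ⟨z, rfl⟩ := QuotientGroup.mk'_surjective (K.subgroupOf H) q
      have : (z : G) ∈ L := by rw [h]; exact z.2
      obtain ⟨z', hz', hzz⟩ := Subgroup.mem_map.mp this
      have : z' = z := Subtype.ext hzz
      rw [this] at hz'
      exact hz'
end
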